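/- arXiv:1611.01818 — 10 statements merged into one kernel-verified Lean document; each statement's English description precedes it below -/
import Mathlib

section
/- Let G be a simple graph on a finite nonempty vertex set and let 0 ≤ β < α ≤ 1 be real numbers. Then the smallest eigenvalue of A_β(G) is at most the smallest eigenvalue of A_α(G); that is, λ_min(A_α(G)) − λ_min(A_β(G)) ≥ 0. -/
open Matrix SimpleGraph

/-- Adjacency matrix of `G` over `ℝ`. -/
noncomputable def adjM {V : Type*} [Fintype V] (G : SimpleGraph V) : Matrix V V ℝ := by
  classical exact G.adjMatrix ℝ

/-- Diagonal matrix of vertex degrees of `G`, over `ℝ`. -/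
noncomputable def degM {V : Type*} [Fintype V] (G : SimpleGraph V) : Matrix V V ℝ := by
  classical exact Matrix.diagonal fun v => (G.degree v : ℝ)

/-- `A_α(G) = α·D(G) + (1-α)·A(G)`. -/
noncomputable def Amix {V : Type*} [Fintype V] (G : SimpleGraph V) (α : ℝ) : Matrix V V ℝ :=
  α • degM G + (1 - α) • adjM G

/-- Smallest eigenvalue of a real symmetric matrix (junk value `0` otherwise). -/
noncomputable def lambdaMin {n : Type*} [Fintype n] (M : Matrix n n ℝ) : ℝ := by
  classical exact if h : M.IsHermitian then ⨅ i, h.eigenvalues i else 0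

/-- Largest eigenvalue of a real symmetric matrix (junk value `0` otherwise). -/
noncomputable def lambdaMax {n : Type*} [Fintype n] (M : Matrix n n ℝ) : ℝ := by
  classical exact if h : M.IsHermitian then ⨆ i, h.eigenvalues i else 0

/-- `α₀(G)`: the smallest `α ∈ [0,1]` such that `A_α(G)` is positive semidefinite. -/
noncomputable def alpha0 {V : Type*} [Fintype V] (G : SimpleGraph V) : ℝ :=
  sInf {α : ℝ | α ∈ Set.Icc (0:ℝ) 1 ∧ (Amix G α).PosSemidef}

lemma herm_Amix {V : Type*} [Fintype V] (G : SimpleGraph V) (γ : ℝ) :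
    (Amix G γ).IsHermitian := by
  classical
  have h1 : (degM G).IsHermitian := Matrix.isHermitian_diagonal _
  have h2 : (adjM G).IsHermitian := by
    show (adjM G)ᴴ = adjM G
    rw [Matrix.conjTranspose_eq_transpose_of_trivial]
    exact SimpleGraph.isSymm_adjMatrix G
  show (Amix G γ)ᴴ = Amix G γ
  rw [Amix, Matrix.conjTranspose_add, Matrix.conjTranspose_smul, Matrix.conjTranspose_smul,
    h1.eq, h2.eq, star_trivial, star_trivial]

lemma psd_sub_lambdaMin {n : Type*} [Fintype n] [DecidableEq n] [Nonempty n]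
    {M : Matrix n n ℝ} (hM : M.IsHermitian) : (M - lambdaMin M • 1).PosSemidef := by
  have hof : (RCLike.ofReal ∘ hM.eigenvalues : n → ℝ) = hM.eigenvalues := funext fun i => rfl
  have hkey : M - lambdaMin M • 1 =
      (hM.eigenvectorUnitary : Matrix n n ℝ) *
        Matrix.diagonal (fun i => hM.eigenvalues i - lambdaMin M) *
        (hM.eigenvectorUnitary : Matrix n n ℝ)ᴴ := by
    have hUU : (hM.eigenvectorUnitary : Matrix n n ℝ) *
        (hM.eigenvectorUnitary : Matrix n n ℝ)ᴴ = 1 :=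
      (Matrix.mem_unitaryGroup_iff).mp hM.eigenvectorUnitary.2
    have hdiag : Matrix.diagonal (fun i => hM.eigenvalues i - lambdaMin M)
        = Matrix.diagonal hM.eigenvalues - lambdaMin M • 1 := by
      rw [Matrix.smul_one_eq_diagonal, ← Matrix.diagonal_sub]
    rw [hdiag, Matrix.mul_sub, Matrix.sub_mul]
    have h1 : (hM.eigenvectorUnitary : Matrix n n ℝ) * (lambdaMin M • (1 : Matrix n n ℝ)) *
        (hM.eigenvectorUnitary : Matrix n n ℝ)ᴴ = lambdaMin M • 1 := by
      rw [Matrix.mul_smul, Matrix.smul_mul, mul_one, hUU]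
    rw [h1]
    congr 1
    conv_lhs => rw [hM.spectral_theorem]
    rw [hof]
    rfl
  rw [hkey]
  refine Matrix.PosSemidef.mul_mul_conjTranspose_same ?_ _
  refine Matrix.posSemidef_diagonal_iff.mpr fun i => ?_
  rw [sub_nonneg, lambdaMin, dif_pos hM]
  exact ciInf_le (Set.Finite.bddBelow (Set.finite_range _)) i

lemma lambdaMin_dotProduct_le {n : Type*} [Fintype n] [Nonempty n]
    {M : Matrix n n ℝ} (hM : M.IsHermitian) (x : n → ℝ) :
    lambdaMin M * (x ⬝ᵥ x) ≤ x ⬝ᵥ (M *ᵥ x) := by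
  classical
  have h := (psd_sub_lambdaMin hM).dotProduct_mulVec_nonneg x
  rw [star_trivial, Matrix.sub_mulVec, dotProduct_sub, Matrix.smul_mulVec,
    Matrix.one_mulVec, dotProduct_smul, smul_eq_mul, sub_nonneg] at h
  exact h

/-- For 0 ≤ β < α ≤ 1, λ_min(A_α(G)) − λ_min(A_β(G)) ≥ 0. -/
theorem stmt_0 {V : Type*} [Fintype V] [Nonempty V] (G : SimpleGraph V)
    (α β : ℝ) (hβ : 0 ≤ β) (hβα : β < α) (hα : α ≤ 1) :
    0 ≤ lambdaMin (Amix G α) - lambdaMin (Amix G β) := by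
  classical
  have hMα := herm_Amix G α
  have hMβ := herm_Amix G β
  -- difference is (α - β) • Laplacian, PSD
  have hdiff : Amix G α - Amix G β = (α - β) • (G.lapMatrix ℝ) := by
    unfold Amix adjM degM SimpleGraph.lapMatrix SimpleGraph.degMatrix
    ext i j
    simp [Matrix.diagonal_apply, Matrix.smul_apply]
    split_ifs <;> simp_all <;> ring
  have hlapPSD := G.posSemidef_lapMatrix (R := ℝ)
  obtain ⟨i₀, hi₀⟩ := exists_eq_ciInf_of_finite (f := hMα.eigenvalues)
  set v : V → ℝ := ⇑(hMα.eigenvectorBasis i₀) with hv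
  have hvv : v ⬝ᵥ v = 1 := by
    have h2 : (inner ℝ (hMα.eigenvectorBasis i₀) (hMα.eigenvectorBasis i₀) : ℝ) = 1 := by
      rw [real_inner_self_eq_norm_sq, hMα.eigenvectorBasis.orthonormal.1 i₀]; norm_num
    simpa only [EuclideanSpace.inner_eq_star_dotProduct, star_trivial, dotProduct_comm] using h2
  have heig : v ⬝ᵥ (Amix G α *ᵥ v) = lambdaMin (Amix G α) := by
    rw [lambdaMin, dif_pos hMα, ← hi₀]
    have := hMα.eigenvalues_eq i₀
    simp only [RCLike.re_to_real] at this
    rw [this, star_trivial]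
  have hchain : lambdaMin (Amix G β) * (v ⬝ᵥ v) ≤ v ⬝ᵥ (Amix G α *ᵥ v) := by
    refine le_trans (lambdaMin_dotProduct_le hMβ v) ?_
    have h3 := hlapPSD.dotProduct_mulVec_nonneg v
    rw [star_trivial] at h3
    have h4 : (0:ℝ) ≤ v ⬝ᵥ ((Amix G α - Amix G β) *ᵥ v) := by
      rw [hdiff, Matrix.smul_mulVec, dotProduct_smul, smul_eq_mul]
      exact mul_nonneg (by linarith) h3
    rw [Matrix.sub_mulVec, dotProduct_sub, sub_nonneg] at h4
    exact h4
  rw [hvv, mul_one, heig] at hchain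
  linarith
end

section
/- Let G be a simple graph on a finite nonempty vertex set, let L(G) = D(G) − A(G) be its Laplacian matrix, and let 0 ≤ β < α ≤ 1 be real numbers. Then λ_min(A_α(G)) − λ_min(A_β(G)) ≤ (α − β)·λ_max(L(G)), where λ_max denotes the largest eigenvalue. -/
open Matrix SimpleGraph

section Aux
open Matrix

variable {n : Type*} [Fintype n] [DecidableEq n] {M : Matrix n n ℝ}

lemma herm_smul (c : ℝ) (hM : M.IsHermitian) : (c • M).IsHermitian := by
  unfold Matrix.IsHermitian at *
  rw [Matrix.conjTranspose_smul, hM]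
  simp

lemma spec_real (hM : M.IsHermitian) :
    M = (hM.eigenvectorUnitary : Matrix n n ℝ) * diagonal hM.eigenvalues
      * star (hM.eigenvectorUnitary : Matrix n n ℝ) := by
  have := hM.spectral_theorem
  simpa [Function.comp] using this

lemma diag_eq (c : ℝ) (f : n → ℝ) :
    diagonal (fun i => c - f i) = c • (1 : Matrix n n ℝ) - diagonal f := by
  ext i j
  by_cases hij : i = j <;> simp [Matrix.diagonal_apply, Matrix.one_apply, hij]

lemma psd_smul_one_sub (hM : M.IsHermitian) {c : ℝ}
    (h : ∀ i, hM.eigenvalues i ≤ c) : (c • (1 : Matrix n n ℝ) - M).PosSemidef := by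
  have hU : (hM.eigenvectorUnitary : Matrix n n ℝ) * star (hM.eigenvectorUnitary : Matrix n n ℝ) = 1 :=
    (Matrix.mem_unitaryGroup_iff).mp hM.eigenvectorUnitary.2
  have key : c • (1 : Matrix n n ℝ) - M =
      (hM.eigenvectorUnitary : Matrix n n ℝ) * diagonal (fun i => c - hM.eigenvalues i)
        * (hM.eigenvectorUnitary : Matrix n n ℝ)ᴴ := by
    rw [diag_eq, Matrix.mul_sub, Matrix.sub_mul, mul_smul_comm, smul_mul_assoc, mul_one,
      ← Matrix.star_eq_conjTranspose, hU, ← spec_real hM]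
  rw [key]
  exact (Matrix.PosSemidef.diagonal (fun i => sub_nonneg.mpr (h i))).mul_mul_conjTranspose_same _

lemma psd_sub_smul_one (hM : M.IsHermitian) {c : ℝ}
    (h : ∀ i, c ≤ hM.eigenvalues i) : (M - c • (1 : Matrix n n ℝ)).PosSemidef := by
  have hU : (hM.eigenvectorUnitary : Matrix n n ℝ) * star (hM.eigenvectorUnitary : Matrix n n ℝ) = 1 :=
    (Matrix.mem_unitaryGroup_iff).mp hM.eigenvectorUnitary.2
  have key : M - c • (1 : Matrix n n ℝ) =
      (hM.eigenvectorUnitary : Matrix n n ℝ) * diagonal (fun i => hM.eigenvalues i - c)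
        * (hM.eigenvectorUnitary : Matrix n n ℝ)ᴴ := by
    have hdd : diagonal (fun i => hM.eigenvalues i - c) = diagonal hM.eigenvalues - c • 1 := by
      ext i j; by_cases hij : i = j <;> simp [Matrix.diagonal_apply, Matrix.one_apply, hij]
    rw [hdd, Matrix.mul_sub, Matrix.sub_mul, mul_smul_comm, smul_mul_assoc, mul_one,
      ← Matrix.star_eq_conjTranspose, hU, ← spec_real hM]
  rw [key]
  exact (Matrix.PosSemidef.diagonal (fun i => sub_nonneg.mpr (h i))).mul_mul_conjTranspose_same _

lemma le_eigenvalues_of_psd (hM : M.IsHermitian) {c : ℝ}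
    (h : (M - c • (1 : Matrix n n ℝ)).PosSemidef) (i : n) : c ≤ hM.eigenvalues i := by
  have h0 := h.dotProduct_mulVec_nonneg ((WithLp.equiv 2 (n → ℝ)) (hM.eigenvectorBasis i))
  have hv : star ((WithLp.equiv 2 (n → ℝ)) (hM.eigenvectorBasis i)) ⬝ᵥ ((WithLp.equiv 2 (n → ℝ)) (hM.eigenvectorBasis i)) = 1 := by
    have h1 : ‖(hM.eigenvectorBasis i)‖ = 1 := hM.eigenvectorBasis.orthonormal.1 i
    have h2 : (inner ℝ (hM.eigenvectorBasis i) (hM.eigenvectorBasis i) : ℝ) = 1 := by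
      rw [real_inner_self_eq_norm_sq, h1]; norm_num
    rw [← h2, PiLp.inner_apply]
    simp [dotProduct, sq]
  simp only [WithLp.equiv_apply] at h0 hv
  rw [sub_mulVec, smul_mulVec, one_mulVec, hM.mulVec_eigenvectorBasis,
    dotProduct_sub, dotProduct_smul, dotProduct_smul, hv] at h0
  simp at h0
  linarith

lemma psd_smul {c : ℝ} (hc : 0 ≤ c) (hM : M.PosSemidef) : (c • M).PosSemidef := by
  refine .of_dotProduct_mulVec_nonneg (herm_smul c hM.1) (fun x => ?_)
  rw [smul_mulVec, dotProduct_smul]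
  exact mul_nonneg hc (hM.dotProduct_mulVec_nonneg x)


end Aux

/-- For 0 ≤ β < α ≤ 1,
λ_min(A_α(G)) − λ_min(A_β(G)) ≤ (α − β)·λ_max(L(G)), where L(G) = D(G) − A(G). -/
theorem stmt_1 {V : Type*} [Fintype V] [Nonempty V] (G : SimpleGraph V)
    (α β : ℝ) (hβ : 0 ≤ β) (hβα : β < α) (hα : α ≤ 1) :
    lambdaMin (Amix G α) - lambdaMin (Amix G β) ≤ (α - β) * lambdaMax (degM G - adjM G) := by
  classical
  have hAdj : (adjM G).IsHermitian := by
    unfold adjM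
    ext i j
    simp [Matrix.conjTranspose_apply, SimpleGraph.adjMatrix_apply, G.adj_comm]
  have hDeg : (degM G).IsHermitian := by
    unfold degM
    exact Matrix.isHermitian_diagonal _
  have hL : (degM G - adjM G).IsHermitian := hDeg.sub hAdj
  have hAa : (Amix G α).IsHermitian := (herm_smul α hDeg).add (herm_smul (1 - α) hAdj)
  have hAb : (Amix G β).IsHermitian := (herm_smul β hDeg).add (herm_smul (1 - β) hAdj)
  set c : ℝ := α - β with hc
  have hc0 : 0 ≤ c := by simp [hc]; linarith
  set m : ℝ := lambdaMin (Amix G α) with hm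
  set ℓ : ℝ := lambdaMax (degM G - adjM G) with hℓ
  have hmE : m = ⨅ i, hAa.eigenvalues i := by
    rw [hm]; unfold lambdaMin; rw [dif_pos hAa]
  have hℓE : ℓ = ⨆ i, hL.eigenvalues i := by
    rw [hℓ]; unfold lambdaMax; rw [dif_pos hL]
  have hmle : ∀ i, m ≤ hAa.eigenvalues i := fun i => by
    rw [hmE]; exact ciInf_le (Finite.bddBelow_range _) i
  have hlle : ∀ i, hL.eigenvalues i ≤ ℓ := fun i => by
    rw [hℓE]; exact le_ciSup (Finite.bddAbove_range _) i
  have P1 : (Amix G α - m • (1 : Matrix V V ℝ)).PosSemidef := psd_sub_smul_one hAa hmle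
  have P2 : (c • (ℓ • (1 : Matrix V V ℝ) - (degM G - adjM G))).PosSemidef :=
    psd_smul hc0 (psd_smul_one_sub hL hlle)
  have hEq : Amix G β = Amix G α - c • (degM G - adjM G) := by
    unfold Amix
    rw [hc]
    module
  have P3 : (Amix G β - (m - c * ℓ) • (1 : Matrix V V ℝ)).PosSemidef := by
    have heq2 : Amix G β - (m - c * ℓ) • (1 : Matrix V V ℝ)
        = (Amix G α - m • (1 : Matrix V V ℝ))
          + c • (ℓ • (1 : Matrix V V ℝ) - (degM G - adjM G)) := by
      rw [hEq]
      module
    rw [heq2]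
    exact P1.add P2
  have hfin : m - c * ℓ ≤ lambdaMin (Amix G β) := by
    have h1 := le_eigenvalues_of_psd hAb P3
    have : lambdaMin (Amix G β) = ⨅ i, hAb.eigenvalues i := by
      unfold lambdaMin; rw [dif_pos hAb]
    rw [this]
    exact le_ciInf h1
  have : (α - β) * ℓ = c * ℓ := by rw [hc]
  linarith
end

section
/- Let G be a simple graph on a finite vertex set and let α be a real number with 1/2 ≤ α ≤ 1. Then the matrix A_α(G) is positive semidefinite. -/
open Matrix SimpleGraph

/-- If 1/2 ≤ α ≤ 1, then A_α(G) is positive semidefinite. -/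
theorem stmt_3 {V : Type*} [Fintype V] (G : SimpleGraph V)
    (α : ℝ) (hα₁ : 1 / 2 ≤ α) (hα₂ : α ≤ 1) :
    (Amix G α).PosSemidef := by
  classical
  rw [Matrix.posSemidef_iff_dotProduct_mulVec]
  constructor
  · -- Hermitian
    rw [Matrix.IsHermitian, Matrix.conjTranspose_eq_transpose_of_trivial]
    ext i j
    simp only [Amix, degM, adjM, Matrix.transpose_apply, Matrix.add_apply, Matrix.smul_apply,
      Matrix.diagonal_apply, SimpleGraph.adjMatrix_apply, smul_eq_mul]
    by_cases h : i = j
    · subst h; simp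
    · rw [G.adj_comm]
      simp [h, Ne.symm h]
  · intro x
    rw [star_trivial]
    have hdeg : ∀ i : V, (G.degree i : ℝ) = ∑ j : V, if G.Adj i j then (1:ℝ) else 0 := by
      intro i
      rw [SimpleGraph.degree, SimpleGraph.neighborFinset_eq_filter, Finset.card_filter]
      push_cast
      rfl
    have hform : x ⬝ᵥ (Amix G α *ᵥ x) =
        ∑ i : V, ∑ j : V, (if G.Adj i j then α * (x i)^2 + (1-α) * (x i * x j) else 0) := by
      simp only [Amix, Matrix.add_mulVec, Matrix.smul_mulVec, dotProduct_add,
        dotProduct_smul, smul_eq_mul, degM, adjM]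
      rw [G.dotProduct_mulVec_adjMatrix]
      have hd : x ⬝ᵥ (Matrix.diagonal (fun v => (G.degree v : ℝ)) *ᵥ x)
          = ∑ i : V, (G.degree i : ℝ) * ((x i)^2) := by
        simp only [dotProduct, Matrix.mulVec_diagonal, pow_two]
        congr 1; ext i; ring
      rw [hd]
      simp_rw [hdeg, Finset.sum_mul, ite_mul, one_mul, zero_mul, Finset.mul_sum,
        mul_ite, mul_zero, ← Finset.sum_add_distrib, ite_add_ite, zero_add]
      try (congr 1; ext i; congr 1; ext j; by_cases h : G.Adj i j <;> simp [h] <;> ring)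
    have hswap :
        (∑ i : V, ∑ j : V, (if G.Adj i j then α * (x i)^2 + (1-α) * (x i * x j) else 0))
        = ∑ i : V, ∑ j : V, (if G.Adj i j then α * (x j)^2 + (1-α) * (x j * x i) else 0) := by
      rw [Finset.sum_comm]
      congr 1; ext i; congr 1; ext j
      rw [if_congr (G.adj_comm j i) rfl rfl]
    have h2 :
        (∑ i : V, ∑ j : V, (if G.Adj i j then α * (x i)^2 + (1-α) * (x i * x j) else 0))
        + (∑ i : V, ∑ j : V, (if G.Adj i j then α * (x j)^2 + (1-α) * (x j * x i) else 0))
        = ∑ i : V, ∑ j : V, (if G.Adj i j then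
            α * (x i)^2 + α * (x j)^2 + 2 * (1-α) * (x i * x j) else 0) := by
      simp_rw [← Finset.sum_add_distrib, ite_add_ite, add_zero]
      congr 1; ext i; congr 1; ext j; by_cases h : G.Adj i j <;> simp [h] <;> ring
    have hT : 0 ≤ ∑ i : V, ∑ j : V, (if G.Adj i j then
            α * (x i)^2 + α * (x j)^2 + 2 * (1-α) * (x i * x j) else 0) := by
      apply Finset.sum_nonneg
      intro i _
      apply Finset.sum_nonneg
      intro j _
      by_cases h : G.Adj i j
      · simp only [h, if_true]
        nlinarith [sq_nonneg (x i + x j), sq_nonneg (x i - x j)]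
      · simp [h]
    rw [hform]
    linarith [hswap, h2, hT]
end

section
/- Let G be a simple graph on a finite nonempty vertex set with no isolated vertices (every vertex has degree at least 1), and let α be a real number with 1/2 < α ≤ 1. Then the matrix A_α(G) is positive definite. -/
open Matrix SimpleGraph

section aux

variable {V : Type*} [Fintype V] (G : SimpleGraph V) [DecidableRel G.Adj]

lemma aux_left (g : V → ℝ) : (∑ i : V, ∑ j : V, if G.Adj i j then g i else 0)
    = ∑ i : V, (G.degree i : ℝ) * g i := by
  refine Finset.sum_congr rfl fun i _ => ?_
  rw [← Finset.sum_filter, ← neighborFinset_eq_filter, Finset.sum_const,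
    card_neighborFinset_eq_degree, nsmul_eq_mul]

lemma aux_right (g : V → ℝ) : (∑ i : V, ∑ j : V, if G.Adj i j then g j else 0)
    = ∑ i : V, (G.degree i : ℝ) * g i := by
  rw [Finset.sum_comm, ← aux_left G g]
  refine Finset.sum_congr rfl fun i _ => Finset.sum_congr rfl fun j _ => ?_
  exact if_congr (G.adj_comm j i) rfl rfl

/-- The key identity for the quadratic form of `A_α`. -/
lemma aux_quad (α : ℝ) (x : V → ℝ) :
    x ⬝ᵥ (Amix G α *ᵥ x) = (1/2) * ∑ i : V, ∑ j : V,
      (if G.Adj i j then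
        (1-α) * (x i + x j)^2 + (2*α-1) * ((x i)^2 + (x j)^2) else 0) := by
  classical
  have hsplit : ∀ i j : V, (if G.Adj i j then
        (1-α) * (x i + x j)^2 + (2*α-1) * ((x i)^2 + (x j)^2) else 0)
      = α * (if G.Adj i j then (x i)^2 else 0)
        + α * (if G.Adj i j then (x j)^2 else 0)
        + (2 * (1 - α)) * (if G.Adj i j then x i * x j else 0) := by
    intro i j; split <;> ring
  simp_rw [hsplit, Finset.sum_add_distrib, ← Finset.mul_sum]
  rw [aux_left G (fun i => (x i)^2), aux_right G (fun i => (x i)^2)]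
  rw [Amix, Matrix.add_mulVec, Matrix.smul_mulVec, Matrix.smul_mulVec,
    dotProduct_add, dotProduct_smul, dotProduct_smul]
  have hadjm : adjM G = G.adjMatrix ℝ := by
    ext i j; simp [adjM]
  rw [hadjm, G.dotProduct_mulVec_adjMatrix x x]
  have hdm : x ⬝ᵥ (degM G *ᵥ x) = ∑ i : V, (G.degree i : ℝ) * (x i)^2 := by
    simp only [degM, dotProduct, Matrix.mulVec_diagonal]
    exact Finset.sum_congr rfl fun i _ => by rw [mul_comm, sq, mul_assoc]; congr!
  rw [hdm]
  simp only [smul_eq_mul]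
  ring

end aux

/-- If G has no isolated vertices (all degrees ≥ 1) and 1/2 < α ≤ 1,
then A_α(G) is positive definite. -/
theorem stmt_4 {V : Type*} [Fintype V] [Nonempty V] (G : SimpleGraph V)
    [DecidableRel G.Adj] (hdeg : ∀ v : V, 1 ≤ G.degree v)
    (α : ℝ) (hα₁ : 1 / 2 < α) (hα₂ : α ≤ 1) :
    (Amix G α).PosDef := by
  classical
  refine posDef_iff_dotProduct_mulVec.mpr ⟨?_, ?_⟩
  · show (Amix G α)ᴴ = Amix G α
    ext i j
    simp only [Amix, degM, adjM, Matrix.conjTranspose_apply, Matrix.add_apply,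
      Matrix.smul_apply, Matrix.diagonal_apply, SimpleGraph.adjMatrix_apply,
      star_trivial, smul_eq_mul]
    by_cases h : i = j
    · subst h; simp
    · simp [h, Ne.symm h, G.adj_comm i j]
  · intro x hx
    rw [star_trivial, aux_quad G α x]
    have hterm : ∀ i j : V, 0 ≤ (if G.Adj i j then
        (1-α) * (x i + x j)^2 + (2*α-1) * ((x i)^2 + (x j)^2) else 0) := by
      intro i j; split
      · nlinarith [sq_nonneg (x i + x j), sq_nonneg (x i), sq_nonneg (x j)]
      · exact le_refl 0
    obtain ⟨v, hv⟩ : ∃ v, x v ≠ 0 := Function.ne_iff.mp hx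
    obtain ⟨u, hu⟩ : ∃ u, u ∈ G.neighborFinset v := by
      refine Finset.Nonempty.exists_mem (Finset.card_pos.mp ?_)
      rw [card_neighborFinset_eq_degree]; exact hdeg v
    have hadj : G.Adj v u := by rwa [SimpleGraph.mem_neighborFinset] at hu
    have hpos : 0 < ∑ i : V, ∑ j : V, (if G.Adj i j then
        (1-α) * (x i + x j)^2 + (2*α-1) * ((x i)^2 + (x j)^2) else 0) := by
      apply Finset.sum_pos' (fun i _ => Finset.sum_nonneg fun j _ => hterm i j)
      refine ⟨v, Finset.mem_univ v, ?_⟩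
      apply Finset.sum_pos' (fun j _ => hterm v j)
      refine ⟨u, Finset.mem_univ u, ?_⟩
      rw [if_pos hadj]
      have hxv : 0 < x v ^ 2 := by positivity
      nlinarith [sq_nonneg (x v + x u), sq_nonneg (x u), hxv]
    linarith
end

section
/- Let G be a connected simple graph on a finite vertex set containing at least one edge. Then G is bipartite if and only if α₀(G) = 1/2. -/
open Matrix SimpleGraph

set_option linter.unusedSectionVars false

section Aux
variable {V : Type*} [Fintype V]

lemma adjM_of_adj (G : SimpleGraph V) {u v : V} (h : G.Adj u v) : adjM G u v = 1 := by
  simp [adjM, h]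

lemma adjM_of_not_adj (G : SimpleGraph V) {u v : V} (h : ¬ G.Adj u v) : adjM G u v = 0 := by
  simp [adjM, h]

lemma adjM_nonneg (G : SimpleGraph V) (u v : V) : 0 ≤ adjM G u v := by
  by_cases h : G.Adj u v
  · rw [adjM_of_adj G h]; norm_num
  · rw [adjM_of_not_adj G h]

lemma adjM_le_one (G : SimpleGraph V) (u v : V) : adjM G u v ≤ 1 := by
  by_cases h : G.Adj u v
  · rw [adjM_of_adj G h]
  · rw [adjM_of_not_adj G h]; norm_num

lemma adjM_symm (G : SimpleGraph V) (u v : V) : adjM G u v = adjM G v u := by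
  by_cases h : G.Adj u v
  · rw [adjM_of_adj G h, adjM_of_adj G h.symm]
  · rw [adjM_of_not_adj G h, adjM_of_not_adj G fun h' => h h'.symm]

lemma degM_off (G : SimpleGraph V) {u v : V} (h : u ≠ v) : degM G u v = 0 := by
  classical
  simp [degM, Matrix.diagonal_apply_ne _ h]

lemma degM_diag (G : SimpleGraph V) (u : V) : degM G u u = ∑ v, adjM G u v := by
  classical
  have h1 : ∀ v, adjM G u v = if G.Adj u v then (1:ℝ) else 0 := by
    intro v; by_cases h : G.Adj u v <;> simp [adjM, h]
  rw [Finset.sum_congr rfl fun v _ => h1 v]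
  simp [degM, SimpleGraph.degree, SimpleGraph.neighborFinset_eq_filter, Finset.sum_boole,
    Finset.filter_congr_decidable]

noncomputable def dsum (G : SimpleGraph V) (x : V → ℝ) : ℝ :=
  ∑ u, ∑ v, adjM G u v * x u ^ 2

noncomputable def sos (G : SimpleGraph V) (x : V → ℝ) : ℝ :=
  ∑ u, ∑ v, adjM G u v * (x u + x v) ^ 2

lemma dsum_nonneg (G : SimpleGraph V) (x : V → ℝ) : 0 ≤ dsum G x :=
  Finset.sum_nonneg fun u _ => Finset.sum_nonneg fun v _ =>
    mul_nonneg (adjM_nonneg G u v) (sq_nonneg _)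

lemma sos_nonneg (G : SimpleGraph V) (x : V → ℝ) : 0 ≤ sos G x :=
  Finset.sum_nonneg fun u _ => Finset.sum_nonneg fun v _ =>
    mul_nonneg (adjM_nonneg G u v) (sq_nonneg _)

lemma qf_expand (M : Matrix V V ℝ) (x : V → ℝ) :
    x ⬝ᵥ (M *ᵥ x) = ∑ u, ∑ v, M u v * (x u * x v) := by
  simp only [dotProduct, mulVec, Finset.mul_sum]
  exact Finset.sum_congr rfl fun u _ => Finset.sum_congr rfl fun v _ => by ring

lemma qf_deg (G : SimpleGraph V) (x : V → ℝ) : x ⬝ᵥ (degM G *ᵥ x) = dsum G x := by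
  rw [qf_expand]
  refine Finset.sum_congr rfl fun u _ => ?_
  have h1 : ∑ v, degM G u v * (x u * x v) = degM G u u * (x u * x u) :=
    Finset.sum_eq_single u (fun v _ hvu => by rw [degM_off G (Ne.symm hvu), zero_mul])
      (fun h => absurd (Finset.mem_univ u) h)
  rw [h1, degM_diag, Finset.sum_mul]
  exact Finset.sum_congr rfl fun v _ => by ring

lemma swap_sq (G : SimpleGraph V) (x : V → ℝ) :
    ∑ u, ∑ v, adjM G u v * x v ^ 2 = dsum G x := by
  rw [Finset.sum_comm]
  exact Finset.sum_congr rfl fun v _ => Finset.sum_congr rfl fun u _ => by rw [adjM_symm]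

lemma sos_eq (G : SimpleGraph V) (x : V → ℝ) :
    sos G x = 2 * dsum G x + 2 * ∑ u, ∑ v, adjM G u v * (x u * x v) := by
  have key : ∀ u v, adjM G u v * (x u + x v) ^ 2
      = adjM G u v * x u ^ 2 + adjM G u v * x v ^ 2 + 2 * (adjM G u v * (x u * x v)) :=
    fun u v => by ring
  unfold sos
  simp_rw [key, Finset.sum_add_distrib, ← Finset.mul_sum]
  rw [swap_sq]
  unfold dsum
  ring

lemma qf_amix (G : SimpleGraph V) (α : ℝ) (x : V → ℝ) :
    x ⬝ᵥ (Amix G α *ᵥ x) = (1 - α) / 2 * sos G x + (2 * α - 1) * dsum G x := by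
  unfold Amix
  rw [Matrix.add_mulVec, Matrix.smul_mulVec, Matrix.smul_mulVec,
    dotProduct_add, dotProduct_smul, dotProduct_smul, qf_deg, qf_expand, sos_eq]
  simp only [smul_eq_mul]
  ring

lemma amix_herm (G : SimpleGraph V) (α : ℝ) : (Amix G α).IsHermitian := by
  have hsymm : ∀ u v, Amix G α u v = Amix G α v u := by
    intro u v
    by_cases h : u = v
    · subst h; rfl
    · simp only [Amix, Matrix.add_apply, Matrix.smul_apply, degM_off G h,
        degM_off G (Ne.symm h), adjM_symm G u v]
  ext u v
  rw [Matrix.conjTranspose_apply, hsymm v u]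
  exact star_trivial _
end Aux
section Aux2
variable {V : Type*} [Fintype V]

lemma dsum_le (G : SimpleGraph V) (x : V → ℝ) :
    dsum G x ≤ (Fintype.card V : ℝ) * ∑ v, x v ^ 2 := by
  have h1 : ∀ u : V, ∑ v, adjM G u v * x u ^ 2 ≤ (Fintype.card V : ℝ) * x u ^ 2 := by
    intro u
    calc ∑ v, adjM G u v * x u ^ 2
        ≤ ∑ _v : V, 1 * x u ^ 2 :=
          Finset.sum_le_sum fun v _ =>
            mul_le_mul_of_nonneg_right (adjM_le_one G u v) (sq_nonneg _)
      _ = (Fintype.card V : ℝ) * x u ^ 2 := by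
          simp [Finset.sum_const, Finset.card_univ, nsmul_eq_mul]
  calc dsum G x ≤ ∑ u, (Fintype.card V : ℝ) * x u ^ 2 := Finset.sum_le_sum fun u _ => h1 u
    _ = (Fintype.card V : ℝ) * ∑ v, x v ^ 2 := by rw [Finset.mul_sum]

lemma sos_smul (G : SimpleGraph V) (c : ℝ) (x : V → ℝ) :
    sos G (c • x) = c ^ 2 * sos G x := by
  unfold sos
  rw [Finset.mul_sum]
  refine Finset.sum_congr rfl fun u _ => ?_
  rw [Finset.mul_sum]
  refine Finset.sum_congr rfl fun v _ => ?_
  simp only [Pi.smul_apply, smul_eq_mul]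
  ring

lemma walk_ne_zero {G : SimpleGraph V} {x : V → ℝ} (hx : ∀ ⦃u v⦄, G.Adj u v → x v = - x u)
    {u v : V} (p : G.Walk u v) (h : x u ≠ 0) : x v ≠ 0 := by
  induction p with
  | nil => exact h
  | cons hadj _ ih =>
      refine ih ?_
      rw [hx hadj]
      simpa using h

lemma sos_pos (G : SimpleGraph V) (hconn : G.Connected) (hnb : ¬ G.Colorable 2)
    (x : V → ℝ) (hx : x ≠ 0) : 0 < sos G x := by
  rcases (sos_nonneg G x).lt_or_eq with h | h
  · exact h
  exfalso
  have h0 : ∀ u ∈ Finset.univ, ∑ v, adjM G u v * (x u + x v) ^ 2 = 0 :=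
    (Finset.sum_eq_zero_iff_of_nonneg fun u _ =>
      Finset.sum_nonneg fun v _ => mul_nonneg (adjM_nonneg G u v) (sq_nonneg _)).mp h.symm
  have hterm : ∀ ⦃u v : V⦄, G.Adj u v → x v = - x u := by
    intro u v huv
    have h1 : adjM G u v * (x u + x v) ^ 2 = 0 :=
      (Finset.sum_eq_zero_iff_of_nonneg fun v _ =>
        mul_nonneg (adjM_nonneg G u v) (sq_nonneg _)).mp (h0 u (Finset.mem_univ u)) v
        (Finset.mem_univ v)
    rw [adjM_of_adj G huv, one_mul] at h1
    have := pow_eq_zero_iff (n := 2) (by norm_num) |>.mp h1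
    linarith
  obtain ⟨w, hw⟩ := Function.ne_iff.mp hx
  have hw' : x w ≠ 0 := by simpa using hw
  have hall : ∀ v, x v ≠ 0 := fun v =>
    (hconn.preconnected w v).elim fun p => walk_ne_zero hterm p hw'
  refine hnb ⟨SimpleGraph.Coloring.mk (fun v => if 0 < x v then 0 else 1) ?_⟩
  intro a b hab
  have hxb : x b = - x a := hterm hab
  by_cases hpa : 0 < x a
  · have hnb' : ¬ 0 < x b := by rw [hxb]; linarith
    simp [hpa, hnb']
  · have hla : x a < 0 := lt_of_le_of_ne (not_lt.mp hpa) (hall a)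
    have hpb : 0 < x b := by rw [hxb]; linarith
    simp [hpa, hpb]
end Aux2
section Aux3
variable {V : Type*} [Fintype V]

lemma sphere_min (G : SimpleGraph V) [Nonempty V]
    (hpos : ∀ x : V → ℝ, x ≠ 0 → 0 < sos G x) :
    ∃ μ > 0, ∀ x : V → ℝ, μ * (∑ v, x v ^ 2) ≤ sos G x := by
  classical
  set f : EuclideanSpace ℝ V → ℝ := fun y => sos G (fun v => y v) with hf
  have hcont : Continuous f := by
    refine continuous_finset_sum _ fun u _ => continuous_finset_sum _ fun v _ => ?_
    exact continuous_const.mul (by fun_prop)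
  have hne : (Metric.sphere (0 : EuclideanSpace ℝ V) 1).Nonempty := by
    refine ⟨EuclideanSpace.single (Classical.arbitrary V) 1, ?_⟩
    rw [mem_sphere_zero_iff_norm, EuclideanSpace.norm_single]
    norm_num
  obtain ⟨y0, hy0, hmin⟩ :=
    (isCompact_sphere (0 : EuclideanSpace ℝ V) 1).exists_isMinOn hne hcont.continuousOn
  have hy0n : ‖y0‖ = 1 := mem_sphere_zero_iff_norm.mp hy0
  refine ⟨f y0, ?_, ?_⟩
  · refine hpos _ fun hz => ?_
    have hy00 : y0 = 0 := WithLp.ofLp_injective 2 (funext fun v => congrFun hz v)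
    rw [hy00] at hy0n
    simp at hy0n
  · intro x
    by_cases hx : x = 0
    · subst hx
      have : sos G (0 : V → ℝ) = 0 := by
        unfold sos
        refine Finset.sum_eq_zero fun u _ => Finset.sum_eq_zero fun v _ => by simp
      simp [this]
    · set y : EuclideanSpace ℝ V := (WithLp.equiv 2 (V → ℝ)).symm x with hy
      have hyx : ∀ v, y v = x v := fun v => rfl
      have hyne : y ≠ 0 := by
        intro h0
        exact hx (funext fun v => by rw [← hyx v, h0]; rfl)
      set t : ℝ := ‖y‖ with htdef
      have ht : 0 < t := norm_pos_iff.mpr hyne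
      have htne : t ≠ 0 := ne_of_gt ht
      have hmemu : (t⁻¹ • y) ∈ Metric.sphere (0 : EuclideanSpace ℝ V) 1 := by
        rw [mem_sphere_zero_iff_norm, norm_smul, norm_inv, Real.norm_eq_abs,
          abs_of_pos ht]
        field_simp
        exact htdef.symm
      have hmin' : f y0 ≤ f (t⁻¹ • y) := hmin hmemu
      have hfval : f (t⁻¹ • y) = (t⁻¹) ^ 2 * sos G x := by
        have : (fun v => (t⁻¹ • y) v) = t⁻¹ • x := by
          funext v
          simp [Pi.smul_apply, hyx v]
        rw [hf]
        simp only []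
        rw [this, sos_smul]
      have ht2 : t ^ 2 = ∑ v, x v ^ 2 := by
        have := EuclideanSpace.norm_eq y
        rw [← htdef] at this
        rw [this, Real.sq_sqrt (Finset.sum_nonneg fun v _ => sq_nonneg _)]
        refine Finset.sum_congr rfl fun v _ => ?_
        rw [hyx v, Real.norm_eq_abs, sq_abs]
      rw [hfval] at hmin'
      calc f y0 * (∑ v, x v ^ 2) = f y0 * t ^ 2 := by rw [ht2]
        _ ≤ ((t⁻¹) ^ 2 * sos G x) * t ^ 2 := mul_le_mul_of_nonneg_right hmin' (sq_nonneg t)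
        _ = sos G x := by field_simp

lemma half_le_of_bipartite (G : SimpleGraph V) {u0 v0 : V} (hadj : G.Adj u0 v0)
    (hcol : G.Colorable 2) {α : ℝ} (hpsd : (Amix G α).PosSemidef) : 1 / 2 ≤ α := by
  classical
  by_contra hlt
  push_neg at hlt
  obtain ⟨C⟩ := hcol
  set x : V → ℝ := fun v => if C v = 0 then 1 else -1 with hxdef
  have hx2 : ∀ v, x v ^ 2 = 1 := fun v => by by_cases h : C v = 0 <;> simp [hxdef, h]
  have hfin : ∀ i : Fin 2, i = 0 ∨ i = 1 := by decide
  have hsum0 : ∀ u v, G.Adj u v → x u + x v = 0 := by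
    intro u v h
    have hne := C.valid h
    rcases hfin (C u) with h0 | h0 <;> rcases hfin (C v) with h1 | h1
    · exact absurd (h0.trans h1.symm) hne
    · norm_num [hxdef, h0, h1]
    · norm_num [hxdef, h0, h1]
    · exact absurd (h0.trans h1.symm) hne
  have hsos : sos G x = 0 := by
    refine Finset.sum_eq_zero fun u _ => Finset.sum_eq_zero fun v _ => ?_
    by_cases h : G.Adj u v
    · rw [hsum0 u v h]; ring
    · rw [adjM_of_not_adj G h]; ring
  have hdsum : (1:ℝ) ≤ dsum G x := by
    have inner_nonneg : ∀ u : V, 0 ≤ ∑ v, adjM G u v * x u ^ 2 := fun u =>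
      Finset.sum_nonneg fun v _ => mul_nonneg (adjM_nonneg G u v) (sq_nonneg _)
    have h1 : (1:ℝ) ≤ ∑ v, adjM G u0 v * x u0 ^ 2 := by
      have hterm : adjM G u0 v0 * x u0 ^ 2 = 1 := by
        rw [adjM_of_adj G hadj, hx2, one_mul]
      calc (1:ℝ) = adjM G u0 v0 * x u0 ^ 2 := hterm.symm
        _ ≤ ∑ v, adjM G u0 v * x u0 ^ 2 :=
          Finset.single_le_sum (f := fun v => adjM G u0 v * x u0 ^ 2)
            (fun v _ => mul_nonneg (adjM_nonneg G u0 v) (sq_nonneg _)) (Finset.mem_univ v0)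
    calc (1:ℝ) ≤ ∑ v, adjM G u0 v * x u0 ^ 2 := h1
      _ ≤ dsum G x :=
        Finset.single_le_sum (f := fun u => ∑ v, adjM G u v * x u ^ 2)
          (fun u _ => inner_nonneg u) (Finset.mem_univ u0)
  have hq := hpsd.dotProduct_mulVec_nonneg x
  rw [show star x = x from star_trivial x, qf_amix, hsos] at hq
  nlinarith [hdsum]

end Aux3

/-- A connected graph with at least one edge is bipartite
if and only if α₀(G) = 1/2. -/
theorem stmt_8 {V : Type*} [Fintype V] (G : SimpleGraph V)
    (hconn : G.Connected) (hedge : G.edgeSet.Nonempty) :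
    G.Colorable 2 ↔ alpha0 G = 1 / 2 := by
  classical
  obtain ⟨u0, v0, hadj⟩ : ∃ u v, G.Adj u v := by
    obtain ⟨e, he⟩ := hedge
    induction e using Sym2.ind with
    | _ a b => exact ⟨a, b, he⟩
  haveI : Nonempty V := ⟨u0⟩
  have hSdef : alpha0 G = sInf {α : ℝ | α ∈ Set.Icc (0:ℝ) 1 ∧ (Amix G α).PosSemidef} := rfl
  set S := {α : ℝ | α ∈ Set.Icc (0:ℝ) 1 ∧ (Amix G α).PosSemidef} with hS
  have hbdd : BddBelow S := ⟨0, fun a ha => ha.1.1⟩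
  have hhalf : (1/2 : ℝ) ∈ S := by
    refine ⟨⟨by norm_num, by norm_num⟩, .of_dotProduct_mulVec_nonneg (amix_herm G _) fun x => ?_⟩
    rw [show star x = x from star_trivial x, qf_amix]
    have := sos_nonneg G x
    have := dsum_nonneg G x
    nlinarith
  constructor
  · intro hcol
    rw [hSdef]
    refine le_antisymm (csInf_le hbdd hhalf) (le_csInf ⟨_, hhalf⟩ fun α hα => ?_)
    exact half_le_of_bipartite G hadj hcol hα.2
  · intro h12
    by_contra hnb
    obtain ⟨μ, hμ, hlb⟩ := sphere_min G (sos_pos G hconn hnb)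
    set n : ℝ := (Fintype.card V : ℝ) with hn
    have hn0 : (0:ℝ) ≤ n := Nat.cast_nonneg _
    set ε : ℝ := min (1/2) (μ / (8 * n + 8)) with hε
    have hd : (0:ℝ) < 8 * n + 8 := by linarith
    have hε0 : 0 < ε := lt_min (by norm_num) (div_pos hμ hd)
    have hεle : ε ≤ 1/2 := min_le_left _ _
    have hεle2 : ε * (8 * n + 8) ≤ μ := by
      have hm := min_le_right (1/2 : ℝ) (μ / (8 * n + 8))
      calc ε * (8*n+8) ≤ μ / (8*n+8) * (8*n+8) :=
            mul_le_mul_of_nonneg_right hm (le_of_lt hd)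
        _ = μ := by field_simp
    have hmem : (1/2 - ε) ∈ S := by
      refine ⟨⟨by linarith, by linarith⟩, .of_dotProduct_mulVec_nonneg (amix_herm G _) fun x => ?_⟩
      rw [show star x = x from star_trivial x, qf_amix]
      have h1 := hlb x
      have h2 := dsum_le G x
      have h3 := dsum_nonneg G x
      have h4 : (0:ℝ) ≤ ∑ v, x v ^ 2 := Finset.sum_nonneg fun v _ => sq_nonneg _
      have h5 : 2 * ε * n ≤ μ / 4 := by nlinarith
      have p1 : 2 * ε * dsum G x ≤ 2 * ε * (n * (∑ v, x v ^ 2)) :=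
        mul_le_mul_of_nonneg_left h2 (by linarith)
      have p2 : (0:ℝ) ≤ (ε / 2) * sos G x := mul_nonneg (by linarith) (sos_nonneg G x)
      have p3 : (0:ℝ) ≤ (μ / 4 - 2 * ε * n) * (∑ v, x v ^ 2) := mul_nonneg (by linarith) h4
      nlinarith [h1, p1, p2, p3]
    have hle : alpha0 G ≤ 1/2 - ε := hSdef ▸ csInf_le hbdd hmem
    rw [h12] at hle
    linarith
end

section
/- Let G be a connected simple graph on a finite vertex set that is not bipartite, and let Q(G) = D(G) + A(G) be its signless Laplacian. Then α₀(G) ≤ −λ_min(A(G)) / (λ_min(Q(G)) − 2·λ_min(A(G))). -/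
open Matrix SimpleGraph

lemma lambdaMin_eq {n : Type*} [Fintype n] [DecidableEq n] {M : Matrix n n ℝ}
    (h : M.IsHermitian) : lambdaMin M = ⨅ i, h.eigenvalues i := by
  simp only [lambdaMin]
  rw [dif_pos h]
  congr!

lemma lambdaMin_le {n : Type*} [Fintype n] [DecidableEq n] {M : Matrix n n ℝ}
    (h : M.IsHermitian) (i : n) : lambdaMin M ≤ h.eigenvalues i := by
  rw [lambdaMin_eq h]
  exact ciInf_le (Finite.bddBelow_range _) i

lemma sub_smul_one_posSemidef {n : Type*} [Fintype n] [DecidableEq n] {M : Matrix n n ℝ}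
    (h : M.IsHermitian) {c : ℝ} (hc : ∀ i, c ≤ h.eigenvalues i) :
    (M - c • (1 : Matrix n n ℝ)).PosSemidef := by
  have hU := (Matrix.mem_unitaryGroup_iff).mp (h.eigenvectorUnitary).2
  have key : M - c • (1 : Matrix n n ℝ) =
      (h.eigenvectorUnitary : Matrix n n ℝ) * diagonal (fun i => h.eigenvalues i - c) *
        (star (h.eigenvectorUnitary : Matrix n n ℝ)) := by
    have h1 : c • (1 : Matrix n n ℝ) =
        (h.eigenvectorUnitary : Matrix n n ℝ) * diagonal (fun _ => c) *
          (star (h.eigenvectorUnitary : Matrix n n ℝ)) := by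
      rw [show diagonal (fun _ : n => c) = c • (1 : Matrix n n ℝ) by
        simp [Matrix.smul_one_eq_diagonal]]
      rw [Matrix.mul_smul, Matrix.smul_mul, mul_one, hU]
    conv_lhs => rw [h.spectral_theorem, h1, Unitary.conjStarAlgAut_apply]
    rw [← Matrix.sub_mul, ← Matrix.mul_sub, Matrix.diagonal_sub]
    congr 1
  rw [key]
  exact (posSemidef_diagonal_iff.mpr fun i => sub_nonneg.mpr (hc i)).mul_mul_conjTranspose_same _

lemma rayleigh {n : Type*} [Fintype n] {M : Matrix n n ℝ} (h : M.IsHermitian) (x : n → ℝ) :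
    lambdaMin M * (x ⬝ᵥ x) ≤ x ⬝ᵥ M *ᵥ x := by
  classical
  have hp := sub_smul_one_posSemidef h (fun i => lambdaMin_le h i)
  have := (posSemidef_iff_dotProduct_mulVec.mp hp).2 x
  simp only [star_trivial, Matrix.sub_mulVec, Matrix.smul_mulVec, Matrix.one_mulVec,
    dotProduct_sub, dotProduct_smul, smul_eq_mul] at this
  linarith

lemma IsHermitian.real_smul {n : Type*} {M : Matrix n n ℝ} (h : M.IsHermitian) (c : ℝ) :
    (c • M).IsHermitian := by
  unfold Matrix.IsHermitian at *
  rw [conjTranspose_smul, star_trivial, h]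

lemma hermA {V : Type*} [Fintype V] (G : SimpleGraph V) : (adjM G).IsHermitian := by
  classical
  ext i j
  simp [adjM, conjTranspose_apply, adjMatrix_apply, G.adj_comm]

lemma hermD {V : Type*} [Fintype V] (G : SimpleGraph V) : (degM G).IsHermitian := by
  classical
  ext i j
  simp only [degM, conjTranspose_apply, diagonal_apply, star_trivial]
  split_ifs with h1 h2 h3
  · rw [h1]
  · exact absurd h1.symm h2
  · exact absurd h3.symm h1
  · rfl

lemma nbr_swap {V : Type*} [Fintype V] [DecidableEq V] (G : SimpleGraph V)
    [DecidableRel G.Adj] (f : V → V → ℝ) :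
    (∑ v, ∑ u ∈ G.neighborFinset v, f v u) = ∑ v, ∑ u ∈ G.neighborFinset v, f u v := by
  have hN : ∀ v, G.neighborFinset v = Finset.univ.filter (G.Adj v) := by
    intro v; ext u; simp
  simp_rw [hN, Finset.sum_filter]
  rw [Finset.sum_comm]
  refine Finset.sum_congr rfl fun u _ => Finset.sum_congr rfl fun v _ => ?_
  by_cases h : G.Adj v u
  · rw [if_pos h, if_pos ((G.adj_comm v u).mp h)]
  · rw [if_neg h, if_neg (fun h' => h ((G.adj_comm u v).mp h'))]

lemma quadD {V : Type*} [Fintype V] [DecidableEq V] (G : SimpleGraph V)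
    [DecidableRel G.Adj] (x : V → ℝ) :
    x ⬝ᵥ (degM G *ᵥ x) = ∑ v, ∑ u ∈ G.neighborFinset v, x v * x v := by
  rw [dotProduct]
  refine Finset.sum_congr rfl fun v _ => ?_
  rw [Finset.sum_const, nsmul_eq_mul, SimpleGraph.card_neighborFinset_eq_degree]
  simp only [degM, mulVec_diagonal]
  ring_nf
  congr!

lemma quadA {V : Type*} [Fintype V] [DecidableEq V] (G : SimpleGraph V)
    [DecidableRel G.Adj] (x : V → ℝ) :
    x ⬝ᵥ (adjM G *ᵥ x) = ∑ v, ∑ u ∈ G.neighborFinset v, x v * x u := by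
  rw [dotProduct]
  refine Finset.sum_congr rfl fun v _ => ?_
  simp only [adjM]
  rw [adjMatrix_mulVec_apply, Finset.mul_sum]
  congr!

lemma quadQ {V : Type*} [Fintype V] [DecidableEq V] (G : SimpleGraph V)
    [DecidableRel G.Adj] (x : V → ℝ) :
    2 * (x ⬝ᵥ ((degM G + adjM G) *ᵥ x)) =
      ∑ v, ∑ u ∈ G.neighborFinset v, (x v + x u) ^ 2 := by
  have expand : (∑ v, ∑ u ∈ G.neighborFinset v, (x v + x u) ^ 2)
      = (∑ v, ∑ u ∈ G.neighborFinset v, x v * x v)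
        + (∑ v, ∑ u ∈ G.neighborFinset v, x u * x u)
        + 2 * ∑ v, ∑ u ∈ G.neighborFinset v, x v * x u := by
    rw [Finset.mul_sum, ← Finset.sum_add_distrib, ← Finset.sum_add_distrib]
    refine Finset.sum_congr rfl fun v _ => ?_
    rw [Finset.mul_sum, ← Finset.sum_add_distrib, ← Finset.sum_add_distrib]
    refine Finset.sum_congr rfl fun u _ => by ring
  rw [expand, nbr_swap G (fun v u => x u * x u)]
  rw [add_mulVec, dotProduct_add, quadD G x, quadA G x]
  ring

lemma posdefQ {V : Type*} [Fintype V] [DecidableEq V] (G : SimpleGraph V)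
    [DecidableRel G.Adj] (hconn : G.Connected) (hnbip : ¬ G.Colorable 2) :
    (degM G + adjM G).PosDef := by
  refine posDef_iff_dotProduct_mulVec.mpr ⟨(hermD G).add (hermA G), fun x hx => ?_⟩
  rw [star_trivial]
  by_contra hle
  push_neg at hle
  have hsum : (∑ v, ∑ u ∈ G.neighborFinset v, (x v + x u) ^ 2) = 0 := by
    have h1 : (∑ v, ∑ u ∈ G.neighborFinset v, (x v + x u) ^ 2) ≤ 0 := by
      rw [← quadQ G x]; linarith
    have h2 : 0 ≤ ∑ v, ∑ u ∈ G.neighborFinset v, (x v + x u) ^ 2 :=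
      Finset.sum_nonneg fun v _ => Finset.sum_nonneg fun u _ => sq_nonneg _
    linarith
  have hedge : ∀ {u v : V}, G.Adj u v → x u = - x v := by
    intro u v huv
    have h1 : ∀ v ∈ Finset.univ, (0:ℝ) ≤ ∑ u ∈ G.neighborFinset v, (x v + x u) ^ 2 :=
      fun v _ => Finset.sum_nonneg fun u _ => sq_nonneg _
    have h2 := (Finset.sum_eq_zero_iff_of_nonneg h1).mp hsum u (Finset.mem_univ u)
    have h3 := (Finset.sum_eq_zero_iff_of_nonneg
      (fun w _ => sq_nonneg (x u + x w))).mp h2 v (by rwa [mem_neighborFinset])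
    have := pow_eq_zero_iff (n := 2) (by norm_num) |>.mp h3
    linarith
  obtain ⟨v₀, hv₀⟩ := Function.ne_iff.mp hx
  have step : ∀ {a b : V}, G.Walk a b → x a ≠ 0 → x b ≠ 0 := by
    intro a b w
    induction w with
    | nil => exact id
    | cons h p ih =>
      intro ha
      apply ih
      intro hc
      exact ha (by rw [hedge h, hc, neg_zero])
  have hall : ∀ v, x v ≠ 0 := fun v => step (hconn v₀ v).some hv₀
  apply hnbip
  have C : G.Coloring Bool := Coloring.mk (fun v => decide (0 < x v)) (by
    intro u v huv hcol
    have he := hedge huv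
    rcases (hall v).lt_or_gt with hv | hv
    · have : 0 < x u := by rw [he]; linarith
      have := decide_eq_decide.mp hcol |>.mp this
      linarith
    · have : ¬ (0 < x u) := by rw [he]; linarith
      exact this (decide_eq_decide.mp hcol |>.mpr hv))
  simpa using C.colorable

lemma lambdaMin_A_neg {V : Type*} [Fintype V] (G : SimpleGraph V)
    (hnbip : ¬ G.Colorable 2) : lambdaMin (adjM G) < 0 := by
  classical
  obtain ⟨u, v, huv⟩ : ∃ u v, G.Adj u v := by
    by_contra h
    push_neg at h
    exact hnbip ⟨Coloring.mk (fun _ => 0) (fun {a b} hab => absurd hab (h a b))⟩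
  set x : V → ℝ := Pi.single u 1 + Pi.single v (-1) with hxdef
  have hne : u ≠ v := G.ne_of_adj huv
  have hx : ∀ y : V → ℝ, x ⬝ᵥ y = y u - y v := by
    intro y
    rw [hxdef, add_dotProduct, single_dotProduct, single_dotProduct]
    ring
  have hxu : x u = 1 := by simp [hxdef, Pi.single_eq_of_ne hne]
  have hxv : x v = -1 := by simp [hxdef, Pi.single_eq_of_ne hne.symm]
  have hxx : x ⬝ᵥ x = 2 := by rw [hx x, hxu, hxv]; norm_num
  have hAx : x ⬝ᵥ (adjM G *ᵥ x) = -2 := by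
    rw [hx]
    have hmv : ∀ w, (adjM G *ᵥ x) w = adjM G w u - adjM G w v := by
      intro w
      rw [hxdef, mulVec_add, mulVec_single, mulVec_single]
      simp only [Pi.add_apply, Pi.smul_apply, MulOpposite.smul_eq_mul_unop, MulOpposite.unop_op, col_apply, mul_one, mul_neg_one]
      ring
    rw [hmv u, hmv v]
    norm_num [adjM, adjMatrix_apply, huv, huv.symm, G.irrefl]
  have := rayleigh (hermA G) x
  rw [hxx, hAx] at this
  linarith

lemma lambdaMin_Q_pos {V : Type*} [Fintype V] (G : SimpleGraph V)
    (hconn : G.Connected) (hnbip : ¬ G.Colorable 2) :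
    0 < lambdaMin (degM G + adjM G) := by
  classical
  have hpd := posdefQ G hconn hnbip
  have : Nonempty V := hconn.nonempty
  rw [lambdaMin_eq hpd.1]
  obtain ⟨i, hi⟩ := exists_eq_ciInf_of_finite (f := hpd.1.eigenvalues)
  rw [← hi]
  exact hpd.eigenvalues_pos i

/-- For a connected nonbipartite graph G,
α₀(G) ≤ −λ_min(A(G)) / (λ_min(Q(G)) − 2·λ_min(A(G))). -/
theorem stmt_11 {V : Type*} [Fintype V] (G : SimpleGraph V)
    (hconn : G.Connected) (hnbip : ¬ G.Colorable 2) :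
    alpha0 G ≤
      -lambdaMin (adjM G) / (lambdaMin (degM G + adjM G) - 2 * lambdaMin (adjM G)) := by
  classical
  set a := lambdaMin (adjM G) with ha_def
  set q := lambdaMin (degM G + adjM G) with hq_def
  have ha : a < 0 := lambdaMin_A_neg G hnbip
  have hq : 0 < q := lambdaMin_Q_pos G hconn hnbip
  have hden : 0 < q - 2 * a := by linarith
  set α : ℝ := -a / (q - 2 * a) with hα_def
  have hα0 : 0 ≤ α := div_nonneg (by linarith) hden.le
  have hkey : α * (q - 2 * a) = -a := by
    rw [hα_def]; exact div_mul_cancel₀ _ hden.ne'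
  have hzero : α * q + (1 - 2 * α) * a = 0 := by linear_combination hkey
  have h12 : 0 ≤ 1 - 2 * α := by
    have h1 : 1 - 2 * α = q / (q - 2 * a) := by
      rw [hα_def]; field_simp; ring
    rw [h1]; positivity
  have hα1 : α ≤ 1 := by linarith
  have hmix : Amix G α = α • (degM G + adjM G) + (1 - 2 * α) • adjM G := by
    unfold Amix
    rw [smul_add]
    module
  have hQherm : (degM G + adjM G).IsHermitian := (hermD G).add (hermA G)
  have hpsd : (Amix G α).PosSemidef := by
    rw [posSemidef_iff_dotProduct_mulVec]
    constructor
    · rw [hmix]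
      exact (IsHermitian.real_smul hQherm α).add (IsHermitian.real_smul (hermA G) (1 - 2 * α))
    · intro x
      rw [star_trivial, hmix, add_mulVec, smul_mulVec, smul_mulVec,
        dotProduct_add, dotProduct_smul, dotProduct_smul, smul_eq_mul, smul_eq_mul]
      have r1 := rayleigh hQherm x
      have r2 := rayleigh (hermA G) x
      rw [← hq_def] at r1
      rw [← ha_def] at r2
      have e1 : α * (q * (x ⬝ᵥ x)) ≤ α * (x ⬝ᵥ (degM G + adjM G) *ᵥ x) :=
        mul_le_mul_of_nonneg_left r1 hα0
      have e2 : (1 - 2 * α) * (a * (x ⬝ᵥ x)) ≤ (1 - 2 * α) * (x ⬝ᵥ adjM G *ᵥ x) :=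
        mul_le_mul_of_nonneg_left r2 h12
      have e5 : α * (q * (x ⬝ᵥ x)) + (1 - 2 * α) * (a * (x ⬝ᵥ x))
          = (α * q + (1 - 2 * α) * a) * (x ⬝ᵥ x) := by ring
      rw [hzero, zero_mul] at e5
      linarith
  have hmem : α ∈ {β : ℝ | β ∈ Set.Icc (0:ℝ) 1 ∧ (Amix G β).PosSemidef} :=
    ⟨⟨hα0, hα1⟩, hpsd⟩
  have hbdd : BddBelow {β : ℝ | β ∈ Set.Icc (0:ℝ) 1 ∧ (Amix G β).PosSemidef} :=
    ⟨0, fun y hy => hy.1.1⟩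
  exact csInf_le hbdd hmem
end

section
/- Let G be a connected simple graph on n ≥ 3 vertices that is not bipartite. Then α₀(G) < √(⌊n/2⌋·⌈n/2⌉) / (1/(12n²) + 2·√(⌊n/2⌋·⌈n/2⌉)). -/
open Matrix SimpleGraph

section Aux

/-- entry formula for `adjM` -/
lemma adjM_apply {V : Type*} [Fintype V] (G : SimpleGraph V) [DecidableRel G.Adj] (v w : V) :
    adjM G v w = if G.Adj v w then 1 else 0 := by
  unfold adjM
  by_cases h : G.Adj v w <;> simp [h]

lemma degM_apply {V : Type*} [Fintype V] [DecidableEq V] (G : SimpleGraph V)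
    [DecidableRel G.Adj] (v w : V) :
    degM G v w = if v = w then (G.degree v : ℝ) else 0 := by
  unfold degM Matrix.diagonal
  by_cases h : v = w
  · subst h
    simp only [Matrix.of_apply, if_pos rfl]
    congr!
  · simp only [Matrix.of_apply, if_neg h]

/-- Cauchy–Schwarz for lists: `(∑ l)² ≤ |l| * ∑ l²`. -/
lemma list_sq_sum_le (l : List ℝ) : l.sum ^ 2 ≤ l.length * (l.map (· ^ 2)).sum := by
  induction l with
  | nil => simp
  | cons a l ih =>
    have hQ : 0 ≤ (l.map (· ^ 2)).sum := by
      apply List.sum_nonneg; intro x hx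
      obtain ⟨y, _, rfl⟩ := List.mem_map.mp hx; positivity
    have hk : (0:ℝ) ≤ (l.length : ℝ) := Nat.cast_nonneg _
    simp only [List.sum_cons, List.length_cons, List.map_cons, Nat.cast_add, Nat.cast_one]
    rcases eq_or_lt_of_le hk with hk0 | hk0
    · obtain rfl : l = [] := List.length_eq_zero_iff.mp (by exact_mod_cast hk0.symm)
      simp
    · nlinarith [sq_nonneg ((l.length : ℝ) * a - l.sum),
        mul_nonneg (le_of_lt hk0) (sub_nonneg.mpr ih), ih, hQ]

/-- sum over a list with bounded multiplicities. -/
lemma list_sum_le_count {α : Type*} [DecidableEq α] [Fintype α] (l : List α) (f : α → ℝ)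
    (hf : ∀ a, 0 ≤ f a) (c : ℕ) (hc : ∀ a, l.count a ≤ c) :
    (l.map f).sum ≤ (c : ℝ) * ∑ a, f a := by
  rw [Finset.sum_list_map_count]
  calc ∑ a ∈ l.toFinset, (l.count a) • f a ≤ ∑ a ∈ l.toFinset, (c : ℝ) * f a := by
        refine Finset.sum_le_sum fun a _ => ?_
        rw [nsmul_eq_mul]
        exact mul_le_mul_of_nonneg_right (by exact_mod_cast hc a) (hf a)
    _ = (c : ℝ) * ∑ a ∈ l.toFinset, f a := by rw [Finset.mul_sum]
    _ ≤ (c : ℝ) * ∑ a, f a := by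
        refine mul_le_mul_of_nonneg_left ?_ (by positivity)
        exact Finset.sum_le_sum_of_subset_of_nonneg (Finset.subset_univ _) fun a _ _ => hf a

lemma nat_pq_aux {p q a b : ℕ} (hpa : p ≤ a) (hpb : p ≤ b) (h : p + q ≤ a + b) :
    p * q ≤ a * b := by
  zify at *
  nlinarith [mul_nonneg (sub_nonneg.mpr hpa) (sub_nonneg.mpr hpb),
    mul_nonneg (by positivity : (0:ℤ) ≤ (p:ℤ)) (by linarith : (0:ℤ) ≤ (a:ℤ) + b - p - q)]

/-- `p + q ≤ n` implies `p*q ≤ ⌊n/2⌋⌈n/2⌉`. -/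
lemma nat_pq {p q n : ℕ} (h : p + q ≤ n) : p * q ≤ n / 2 * ((n + 1) / 2) := by
  have hab : n / 2 + (n + 1) / 2 = n := by omega
  rcases le_total p q with hpq | hpq
  · exact nat_pq_aux (by omega) (by omega) (by omega)
  · rw [mul_comm]
    exact nat_pq_aux (by omega) (by omega) (by omega)

/-- telescoping bound along a walk. -/
lemma walk_telescope {V : Type*} {G : SimpleGraph V} (x : V → ℝ) :
    ∀ {a b : V} (w : G.Walk a b),
      |x a - (-1:ℝ) ^ w.length * x b| ≤
        (w.darts.map fun d => |x d.fst + x d.snd|).sum := by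
  intro a b w
  induction w with
  | nil => simp
  | @cons u v c h p ih =>
    simp only [SimpleGraph.Walk.darts_cons, List.map_cons, List.sum_cons,
      SimpleGraph.Walk.length_cons]
    have hid : x u - (-1:ℝ) ^ (p.length + 1) * x c
        = (x u + x v) - (x v - (-1:ℝ) ^ p.length * x c) := by
      rw [pow_succ]; ring
    rw [hid]
    calc |(x u + x v) - (x v - (-1:ℝ) ^ p.length * x c)|
        ≤ |x u + x v| + |x v - (-1:ℝ) ^ p.length * x c| := abs_sub _ _
      _ ≤ _ := by
          have := ih
          linarith

lemma darts_nodup_of_trail {V : Type*} {G : SimpleGraph V} [DecidableEq V] {a b : V}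
    {w : G.Walk a b} (h : w.IsTrail) : w.darts.Nodup := by
  have h2 := h.edges_nodup
  rw [SimpleGraph.Walk.edges] at h2
  exact h2.of_map _

lemma dart_sum {V : Type*} [Fintype V] [DecidableEq V] (G : SimpleGraph V) [DecidableRel G.Adj]
    (F : V → V → ℝ) :
    ∑ d : G.Dart, F d.fst d.snd = ∑ v, ∑ w, if G.Adj v w then F v w else 0 := by
  have h1 : ∑ v, ∑ w, (if G.Adj v w then F v w else 0)
      = ∑ p : V × V, (if G.Adj p.1 p.2 then F p.1 p.2 else 0) := by
    rw [Fintype.sum_prod_type]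
  rw [h1, ← Finset.sum_filter]
  refine Finset.sum_bij (fun (d : G.Dart) _ => d.toProd) ?_ ?_ ?_ ?_
  · intro d _
    simp only [Finset.mem_filter, Finset.mem_univ, true_and]
    exact d.adj
  · intro d1 _ d2 _ hh
    exact SimpleGraph.Dart.ext _ _ hh
  · intro p hp
    simp only [Finset.mem_filter, Finset.mem_univ, true_and] at hp
    exact ⟨⟨p, hp⟩, Finset.mem_univ _, rfl⟩
  · intro d _
    rfl

end Aux

set_option maxHeartbeats 2000000 in
/-- For a connected nonbipartite graph G of order n ≥ 3,
α₀(G) < √(⌊n/2⌋·⌈n/2⌉) / (1/(12n²) + 2·√(⌊n/2⌋·⌈n/2⌉)). -/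
theorem stmt_12 {V : Type*} [Fintype V] (G : SimpleGraph V)
    (hconn : G.Connected) (hnbip : ¬ G.Colorable 2)
    (n : ℕ) (hn : n = Fintype.card V) (hn3 : 3 ≤ n) :
    alpha0 G <
      Real.sqrt ((n / 2 : ℕ) * ((n + 1) / 2 : ℕ)) /
        (1 / (12 * (n : ℝ) ^ 2) + 2 * Real.sqrt ((n / 2 : ℕ) * ((n + 1) / 2 : ℕ))) := by
  classical
  have hnV : Nonempty V := Fintype.card_pos_iff.mp (by omega)
  set F : ℝ := ((n / 2 : ℕ) : ℝ) * (((n + 1) / 2 : ℕ) : ℝ) with hFdef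
  set s := Real.sqrt F with hsdef
  set ε' : ℝ := 2 / (5 * (n:ℝ) * (4 * (n:ℝ) - 3)) with hep'def
  set ε : ℝ := 1 / (12 * (n : ℝ) ^ 2) with hepdef
  have hnR : (3:ℝ) ≤ (n:ℝ) := by exact_mod_cast hn3
  have hF2 : (2:ℝ) ≤ F := by
    have h1 : (1:ℕ) ≤ n / 2 := by omega
    have h2 : (2:ℕ) ≤ (n+1)/2 := by omega
    have h1' : (1:ℝ) ≤ ((n / 2 : ℕ) : ℝ) := by exact_mod_cast h1
    have h2' : (2:ℝ) ≤ (((n+1) / 2 : ℕ) : ℝ) := by exact_mod_cast h2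
    rw [hFdef]; nlinarith
  have hF0 : (0:ℝ) ≤ F := by linarith
  have hs0 : 0 < s := Real.sqrt_pos.mpr (by linarith)
  have h43 : (0:ℝ) < 4*(n:ℝ) - 3 := by linarith
  have hden : (0:ℝ) < 5 * (n:ℝ) * (4 * (n:ℝ) - 3) := by nlinarith
  have hep'0 : 0 < ε' := by rw [hep'def]; positivity
  have hep0 : 0 < ε := by rw [hepdef]; positivity
  have hepep' : ε < ε' := by
    rw [hepdef, hep'def, div_lt_div_iff₀ (by positivity) hden]
    nlinarith
  -- quadratic form formulas
  have hA : ∀ x : V → ℝ, x ⬝ᵥ (adjM G) *ᵥ x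
      = ∑ v, ∑ w, (if G.Adj v w then x v * x w else 0) := by
    intro x
    have hrow : ∀ v, ((adjM G) *ᵥ x) v = ∑ w, (if G.Adj v w then x w else 0) := by
      intro v
      simp [Matrix.mulVec, dotProduct, adjM_apply, ite_mul, one_mul, zero_mul]
    simp only [dotProduct, hrow, Finset.mul_sum]
    refine Finset.sum_congr rfl fun v _ => Finset.sum_congr rfl fun w _ => ?_
    by_cases h : G.Adj v w <;> simp [h]
  have hD : ∀ x : V → ℝ, x ⬝ᵥ (degM G) *ᵥ x = ∑ v, (G.degree v : ℝ) * x v ^ 2 := by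
    intro x
    have hrow : ∀ v, ((degM G) *ᵥ x) v = (G.degree v : ℝ) * x v := by
      intro v
      simp [Matrix.mulVec, dotProduct, degM_apply, ite_mul, zero_mul,
        Finset.sum_ite_eq, Finset.mem_univ]
    simp only [dotProduct, hrow]
    refine Finset.sum_congr rfl fun v _ => by ring
  have hdeg : ∀ v, (G.degree v : ℝ) = ∑ w, if G.Adj v w then (1:ℝ) else 0 := by
    intro v
    have h1 : G.degree v = ∑ w, if G.Adj v w then 1 else 0 := by
      rw [← SimpleGraph.card_neighborFinset_eq_degree, SimpleGraph.neighborFinset_eq_filter,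
        Finset.card_filter]
    rw [h1]
    push_cast
    rfl
  have hQform : ∀ x : V → ℝ, ∑ d : G.Dart, (x d.fst + x d.snd)^2
      = 2 * (x ⬝ᵥ (degM G) *ᵥ x + x ⬝ᵥ (adjM G) *ᵥ x) := by
    intro x
    rw [dart_sum G (fun v w => (x v + x w)^2), hD, hA]
    have e1 : ∀ v w : V, (if G.Adj v w then (x v + x w)^2 else 0)
        = (if G.Adj v w then (1:ℝ) else 0) * x v^2 + (if G.Adj v w then (1:ℝ) else 0) * x w^2
          + 2*(if G.Adj v w then x v * x w else 0) := by
      intro v w; by_cases h : G.Adj v w <;> simp [h] <;> ring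
    simp only [e1, Finset.sum_add_distrib]
    have c1 : ∑ v, ∑ w, (if G.Adj v w then (1:ℝ) else 0) * x v^2
        = ∑ v, (G.degree v : ℝ) * x v^2 := by
      refine Finset.sum_congr rfl fun v _ => ?_
      rw [← Finset.sum_mul, ← hdeg]
    have c2 : ∑ v, ∑ w, (if G.Adj v w then (1:ℝ) else 0) * x w^2
        = ∑ v, (G.degree v : ℝ) * x v^2 := by
      rw [Finset.sum_comm]
      refine Finset.sum_congr rfl fun w _ => ?_
      have : ∀ v, (if G.Adj v w then (1:ℝ) else 0) = (if G.Adj w v then (1:ℝ) else 0) := by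
        intro v; rw [G.adj_comm]
      simp only [this]
      rw [← Finset.sum_mul, ← hdeg]
    have c3 : ∑ v, ∑ w, 2*(if G.Adj v w then x v * x w else 0)
        = 2 * ∑ v, ∑ w, (if G.Adj v w then x v * x w else 0) := by
      rw [Finset.mul_sum]
      exact Finset.sum_congr rfl fun v _ => by rw [Finset.mul_sum]
    rw [c1, c2, c3]; ring
  -- Constantine-type bound
  have hConst : ∀ x : V → ℝ, -s * (∑ v, x v ^ 2) ≤ x ⬝ᵥ (adjM G) *ᵥ x := by
    intro x
    rw [hA x]
    set p : V → ℝ := fun v => max (x v) 0 with hpdef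
    set m : V → ℝ := fun v => max (-(x v)) 0 with hmdef
    have hp0 : ∀ v, 0 ≤ p v := fun v => le_max_right _ _
    have hm0 : ∀ v, 0 ≤ m v := fun v => le_max_right _ _
    have hxpm : ∀ v, x v = p v - m v := fun v =>
      (max_zero_sub_max_neg_zero_eq_self (x v)).symm
    have hterm : ∀ v w, -(p v * m w + m v * p w) ≤ (if G.Adj v w then x v * x w else 0) := by
      intro v w
      by_cases h : G.Adj v w
      · rw [if_pos h, hxpm v, hxpm w]
        nlinarith [mul_nonneg (hp0 v) (hp0 w), mul_nonneg (hm0 v) (hm0 w)]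
      · rw [if_neg h]
        nlinarith [mul_nonneg (hp0 v) (hm0 w), mul_nonneg (hm0 v) (hp0 w)]
    have key : 0 ≤ (∑ v, ∑ w, (if G.Adj v w then x v * x w else 0))
        + ((∑ v, p v) * (∑ w, m w) + (∑ v, m v) * (∑ w, p w)) := by
      have h0 : 0 ≤ ∑ v, ∑ w, ((if G.Adj v w then x v * x w else 0) + (p v * m w + m v * p w)) :=
        Finset.sum_nonneg fun v _ => Finset.sum_nonneg fun w _ => by linarith [hterm v w]
      calc (0:ℝ) ≤ _ := h0
        _ = _ := by
            rw [Finset.sum_mul_sum, Finset.sum_mul_sum]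
            simp only [Finset.sum_add_distrib]
    set S := ∑ v, p v with hSdef
    set T := ∑ v, m v with hTdef
    have hS0 : 0 ≤ S := Finset.sum_nonneg fun v _ => hp0 v
    have hT0 : 0 ≤ T := Finset.sum_nonneg fun v _ => hm0 v
    clear_value S T
    set P := Finset.univ.filter (fun v => 0 < x v) with hPdef
    set N := Finset.univ.filter (fun v => x v < 0) with hNdef
    set A2 := ∑ v ∈ P, x v ^ 2 with hA2def
    set B2 := ∑ v ∈ N, x v ^ 2 with hB2def
    have hA20 : 0 ≤ A2 := Finset.sum_nonneg fun v _ => sq_nonneg _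
    have hB20 : 0 ≤ B2 := Finset.sum_nonneg fun v _ => sq_nonneg _
    clear_value A2 B2
    have hSP : S = ∑ v ∈ P, x v := by
      rw [hSdef, ← Finset.sum_subset (Finset.subset_univ P)]
      · exact Finset.sum_congr rfl fun v hv => by
          rw [hPdef] at hv
          simp only [Finset.mem_filter] at hv
          exact max_eq_left hv.2.le
      · intro v _ hv
        rw [hPdef] at hv
        simp only [Finset.mem_filter, Finset.mem_univ, true_and, not_lt] at hv
        exact max_eq_right hv
    have hTN : T = ∑ v ∈ N, -(x v) := by
      rw [hTdef, ← Finset.sum_subset (Finset.subset_univ N)]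
      · exact Finset.sum_congr rfl fun v hv => by
          rw [hNdef] at hv
          simp only [Finset.mem_filter] at hv
          exact max_eq_left (by linarith [hv.2])
      · intro v _ hv
        rw [hNdef] at hv
        simp only [Finset.mem_filter, Finset.mem_univ, true_and, not_lt] at hv
        exact max_eq_right (by linarith)
    have hS2 : S^2 ≤ (P.card : ℝ) * A2 := by
      rw [hSP]
      have := Finset.sum_mul_sq_le_sq_mul_sq P (fun _ => (1:ℝ)) (fun v => x v)
      simp only [one_mul, one_pow, Finset.sum_const, nsmul_eq_mul, mul_one] at this
      rw [hA2def]
      exact this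
    have hT2 : T^2 ≤ (N.card : ℝ) * B2 := by
      rw [hTN]
      have := Finset.sum_mul_sq_le_sq_mul_sq N (fun _ => (1:ℝ)) (fun v => -(x v))
      simp only [one_mul, one_pow, Finset.sum_const, nsmul_eq_mul, mul_one] at this
      rw [hB2def]
      calc (∑ v ∈ N, -x v)^2 ≤ (N.card : ℝ) * ∑ v ∈ N, (-x v)^2 := by
            simpa using this
        _ = (N.card : ℝ) * ∑ v ∈ N, (x v)^2 := by
            congr 1
            exact Finset.sum_congr rfl fun v _ => by ring
    have hdisj : Disjoint P N := by
      rw [Finset.disjoint_left]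
      intro v hv hv'
      rw [hPdef] at hv; rw [hNdef] at hv'
      simp only [Finset.mem_filter] at hv hv'
      linarith [hv.2, hv'.2]
    have hPN : P.card + N.card ≤ n := by
      rw [← Finset.card_union_of_disjoint hdisj, hn]
      exact le_trans (Finset.card_le_univ _) (le_of_eq (Finset.card_univ))
    have hpqF : (P.card : ℝ) * (N.card : ℝ) ≤ F := by
      have := nat_pq hPN
      rw [hFdef]
      exact_mod_cast this
    have hAB : A2 + B2 ≤ ∑ v, x v ^ 2 := by
      rw [hA2def, hB2def, ← Finset.sum_union hdisj]
      exact Finset.sum_le_sum_of_subset_of_nonneg (Finset.subset_univ _)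
        fun v _ _ => sq_nonneg _
    have h2ST : S * T + T * S ≤ s * (A2 + B2) := by
      have hsq : (S * T + T * S)^2 ≤ F * (A2 + B2)^2 := by
        have hST2 : S^2 * T^2 ≤ ((P.card : ℝ) * A2) * ((N.card : ℝ) * B2) :=
          mul_le_mul hS2 hT2 (sq_nonneg _) (mul_nonneg (Nat.cast_nonneg _) hA20)
        have e0 : (S*T + T*S)^2 = 4*(S^2*T^2) := by ring
        have h_1 : 4*(S^2*T^2) ≤ 4*(((P.card:ℝ)*A2)*((N.card:ℝ)*B2)) := by linarith
        have e1 : 4*(((P.card:ℝ)*A2)*((N.card:ℝ)*B2))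
            = ((P.card:ℝ)*(N.card:ℝ))*(4*(A2*B2)) := by ring
        have h_2 : ((P.card:ℝ)*(N.card:ℝ))*(4*(A2*B2)) ≤ F*(4*(A2*B2)) :=
          mul_le_mul_of_nonneg_right hpqF
            (by have := mul_nonneg hA20 hB20; linarith)
        have h_3 : F*(4*(A2*B2)) ≤ F*((A2+B2)^2) :=
          mul_le_mul_of_nonneg_left (by nlinarith [sq_nonneg (A2-B2)]) hF0
        linarith
      have h1 : S * T + T * S ≤ Real.sqrt (F * (A2 + B2)^2) := by
        have h2 := Real.sqrt_le_sqrt hsq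
        rwa [Real.sqrt_sq (by nlinarith [mul_nonneg hS0 hT0])] at h2
      calc S * T + T * S ≤ Real.sqrt (F * (A2 + B2)^2) := h1
        _ = s * (A2 + B2) := by
            rw [Real.sqrt_mul hF0, Real.sqrt_sq (by linarith)]
    have hfin : s * (A2 + B2) ≤ s * ∑ v, x v ^ 2 :=
      mul_le_mul_of_nonneg_left hAB (le_of_lt hs0)
    linarith [key]
  -- base vertex and path system
  obtain ⟨v0⟩ := hnV
  let pth : ∀ v, G.Walk v0 v := fun v => ((hconn.preconnected v0 v).some).bypass
  have pth_path : ∀ v, (pth v).IsPath := fun v => SimpleGraph.Walk.bypass_isPath _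
  have pth_len : ∀ v, (pth v).length < n := fun v => hn ▸ (pth_path v).length_lt
  -- odd structure: an edge whose endpoints have equal path-parity
  have hex : ∃ a b, G.Adj a b ∧ (pth a).length % 2 = (pth b).length % 2 := by
    by_contra hno
    push_neg at hno
    apply hnbip
    have hcol : G.Colorable (Fintype.card Bool) :=
      (SimpleGraph.Coloring.mk (fun v => decide ((pth v).length % 2 = 0)) (by
        intro a b hab hcontra
        have h1 : ((pth a).length % 2 = 0) ↔ ((pth b).length % 2 = 0) :=
          decide_eq_decide.mp hcontra
        have h2 := hno a b hab
        rcases Nat.mod_two_eq_zero_or_one (pth a).length with h3 | h3 <;>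
          rcases Nat.mod_two_eq_zero_or_one (pth b).length with h4 | h4 <;>
          simp [h3, h4] at h1 h2 ⊢)).colorable
    simpa using hcol
  obtain ⟨a, b, hab, hpar⟩ := hex
  -- the lower bound on the signless Laplacian quadratic form
  have hQlow : ∀ x : V → ℝ, ε' * (∑ v, x v ^ 2)
      ≤ x ⬝ᵥ (degM G) *ᵥ x + x ⬝ᵥ (adjM G) *ᵥ x := by
    intro x
    obtain ⟨u, -, hu⟩ := Finset.exists_max_image Finset.univ (fun v => x v ^ 2)
      ⟨v0, Finset.mem_univ _⟩
    let q : G.Walk u a := ((hconn.preconnected u a).some).bypass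
    have hq_path : q.IsPath := SimpleGraph.Walk.bypass_isPath _
    have hq_len : q.length < n := hn ▸ hq_path.length_lt
    let C : G.Walk a a := (pth a).reverse.append
      ((pth b).append (SimpleGraph.Walk.cons hab.symm SimpleGraph.Walk.nil))
    let W : G.Walk u u := q.append (C.append q.reverse)
    have hWlen : W.length = q.length + (((pth a).length + ((pth b).length + 1)) + q.length) := by
      simp only [W, C, SimpleGraph.Walk.length_append, SimpleGraph.Walk.length_reverse,
        SimpleGraph.Walk.length_cons, SimpleGraph.Walk.length_nil]
    have hWodd : Odd W.length := by
      rw [hWlen, Nat.odd_iff]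
      omega
    have hWle : (W.length : ℝ) ≤ 4 * (n:ℝ) - 3 := by
      have h1 : W.length + 3 ≤ 4 * n := by
        rw [hWlen]
        have := pth_len a
        have := pth_len b
        omega
      have h1' : ((W.length + 3 : ℕ) : ℝ) ≤ ((4 * n : ℕ) : ℝ) := by exact_mod_cast h1
      push_cast at h1'
      linarith
    have hWdarts : W.darts = q.darts ++ (((pth a).reverse.darts
        ++ ((pth b).darts ++ [(⟨(b, a), hab.symm⟩ : G.Dart)])) ++ q.reverse.darts) := by
      simp [W, C, SimpleGraph.Walk.darts_append, SimpleGraph.Walk.darts_cons,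
        SimpleGraph.Walk.darts_nil]
    have hcount : ∀ d : G.Dart, W.darts.count d ≤ 5 := by
      intro d
      have c1 := List.nodup_iff_count_le_one.mp (darts_nodup_of_trail hq_path.isTrail) d
      have c2 := List.nodup_iff_count_le_one.mp
        (darts_nodup_of_trail (pth_path a).reverse.isTrail) d
      have c3 := List.nodup_iff_count_le_one.mp (darts_nodup_of_trail (pth_path b).isTrail) d
      have c4 : ([(⟨(b, a), hab.symm⟩ : G.Dart)]).count d ≤ 1 := by
        simpa using List.count_le_length (a := d) (l := [(⟨(b, a), hab.symm⟩ : G.Dart)])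
      have c5 := List.nodup_iff_count_le_one.mp
        (darts_nodup_of_trail hq_path.reverse.isTrail) d
      rw [hWdarts]
      simp only [List.count_append]
      omega
    -- telescoping
    have htel : 2 * |x u| ≤ (W.darts.map fun d => |x d.fst + x d.snd|).sum := by
      have h1 := walk_telescope x W
      rw [hWodd.neg_one_pow] at h1
      have e : x u - (-1:ℝ) * x u = 2 * x u := by ring
      rw [e, abs_mul, abs_two] at h1
      exact h1
    have habs0 : 0 ≤ (W.darts.map fun d => |x d.fst + x d.snd|).sum := by
      apply List.sum_nonneg
      intro y hy
      obtain ⟨d, _, rfl⟩ := List.mem_map.mp hy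
      exact abs_nonneg _
    have hCS := list_sq_sum_le (W.darts.map fun d => |x d.fst + x d.snd|)
    have hlenl : ((W.darts.map fun d => |x d.fst + x d.snd|).length : ℝ) = (W.length : ℝ) := by
      rw [List.length_map, SimpleGraph.Walk.length_darts]
    have hmapmap : ((W.darts.map fun d => |x d.fst + x d.snd|).map (· ^ 2))
        = W.darts.map (fun d => (x d.fst + x d.snd)^2) := by
      rw [List.map_map]
      exact List.map_congr_left fun d _ => sq_abs _
    have hcnt : (W.darts.map fun d => (x d.fst + x d.snd)^2).sum
        ≤ 5 * ∑ d : G.Dart, (x d.fst + x d.snd)^2 := by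
      have := list_sum_le_count W.darts (fun d => (x d.fst + x d.snd)^2)
        (fun d => sq_nonneg _) 5 hcount
      simpa using this
    have hdge0 : 0 ≤ ∑ d : G.Dart, (x d.fst + x d.snd)^2 :=
      Finset.sum_nonneg fun d _ => sq_nonneg _
    have hx2 : ∑ v, x v ^ 2 ≤ (n : ℝ) * x u ^ 2 := by
      calc ∑ v, x v ^ 2 ≤ ∑ _v : V, x u ^ 2 :=
            Finset.sum_le_sum fun v _ => hu v (Finset.mem_univ v)
        _ = (Fintype.card V : ℝ) * x u ^ 2 := by
            rw [Finset.sum_const, nsmul_eq_mul, Finset.card_univ]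
        _ = (n : ℝ) * x u ^ 2 := by rw [hn]
    -- chain it all together
    have key : 4 * x u ^ 2 ≤ (4 * (n:ℝ) - 3) *
        (5 * (2 * (x ⬝ᵥ (degM G) *ᵥ x + x ⬝ᵥ (adjM G) *ᵥ x))) := by
      have h1 : (2 * |x u|)^2 ≤ ((W.darts.map fun d => |x d.fst + x d.snd|).sum)^2 :=
        pow_le_pow_left₀ (by positivity) htel 2
      have h2 : ((W.darts.map fun d => |x d.fst + x d.snd|).sum)^2
          ≤ (W.length : ℝ) * (W.darts.map (fun d => (x d.fst + x d.snd)^2)).sum := by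
        rw [← hmapmap, ← hlenl]
        exact hCS
      have h3 : (W.length : ℝ) * (W.darts.map (fun d => (x d.fst + x d.snd)^2)).sum
          ≤ (4 * (n:ℝ) - 3) * (5 * ∑ d : G.Dart, (x d.fst + x d.snd)^2) := by
        have hmsum0 : 0 ≤ (W.darts.map (fun d => (x d.fst + x d.snd)^2)).sum := by
          apply List.sum_nonneg
          intro y hy
          obtain ⟨d, _, rfl⟩ := List.mem_map.mp hy
          exact sq_nonneg _
        calc (W.length : ℝ) * (W.darts.map (fun d => (x d.fst + x d.snd)^2)).sum
            ≤ (4 * (n:ℝ) - 3) * (W.darts.map (fun d => (x d.fst + x d.snd)^2)).sum :=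
              mul_le_mul_of_nonneg_right hWle hmsum0
          _ ≤ (4 * (n:ℝ) - 3) * (5 * ∑ d : G.Dart, (x d.fst + x d.snd)^2) :=
              mul_le_mul_of_nonneg_left hcnt (by linarith)
      have h4 : (2 * |x u|)^2 = 4 * x u ^ 2 := by
        rw [mul_pow, sq_abs]; ring
      rw [← hQform x]
      calc 4 * x u ^ 2 = (2 * |x u|)^2 := h4.symm
        _ ≤ _ := le_trans h1 (le_trans h2 h3)
    rw [hep'def, div_mul_eq_mul_div, div_le_iff₀ hden]
    nlinarith [mul_le_mul_of_nonneg_left key (by positivity : (0:ℝ) ≤ (n:ℝ)), hx2]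
  -- assemble
  set αs : ℝ := s / (ε' + 2 * s) with hαsdef
  have hd2 : 0 < ε' + 2 * s := by linarith
  have hα0 : 0 ≤ αs := by rw [hαsdef]; positivity
  have hα1 : αs ≤ 1 := by
    rw [hαsdef, div_le_one hd2]
    linarith
  have hαhalf : 0 ≤ 1 - 2 * αs := by
    have h2s : αs * 2 ≤ 1 := by
      rw [hαsdef, div_mul_eq_mul_div, div_le_one hd2]
      linarith
    linarith
  have hαmul : αs * (ε' + 2 * s) = s := by
    rw [hαsdef]
    field_simp
  have herm : (Amix G αs).IsHermitian := by
    have hsm : ∀ (t : ℝ) (M : Matrix V V ℝ), M.IsHermitian → (t • M).IsHermitian := by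
      intro t M hM
      rw [Matrix.IsHermitian, Matrix.conjTranspose_smul, hM]
      simp
    have h1 : (degM G).IsHermitian := by
      rw [Matrix.IsHermitian, Matrix.conjTranspose_eq_transpose_of_trivial]
      unfold degM
      rw [Matrix.diagonal_transpose]
    have h2 : (adjM G).IsHermitian := by
      rw [Matrix.IsHermitian, Matrix.conjTranspose_eq_transpose_of_trivial]
      unfold adjM
      rw [SimpleGraph.transpose_adjMatrix]
    exact (hsm _ _ h1).add (hsm _ _ h2)
  have hPSD : (Amix G αs).PosSemidef := by
    refine Matrix.posSemidef_iff_dotProduct_mulVec.mpr ⟨herm, fun x => ?_⟩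
    have hstar : star x = x := by
      funext v; simp
    rw [hstar]
    have hform : x ⬝ᵥ ((Amix G αs) *ᵥ x)
        = αs * (x ⬝ᵥ (degM G) *ᵥ x) + (1 - αs) * (x ⬝ᵥ (adjM G) *ᵥ x) := by
      rw [Amix, Matrix.add_mulVec, Matrix.smul_mulVec, Matrix.smul_mulVec,
        dotProduct_add, dotProduct_smul, dotProduct_smul]
      simp [smul_eq_mul]
    rw [hform]
    have t1 := mul_le_mul_of_nonneg_left (hQlow x) hα0
    have t2 := mul_le_mul_of_nonneg_left (hConst x) hαhalf
    have hSig0 : 0 ≤ ∑ v, x v ^ 2 := Finset.sum_nonneg fun v _ => sq_nonneg _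
    have e2 : (αs * (ε' + 2 * s)) * (∑ v, x v ^ 2) = s * (∑ v, x v ^ 2) := by rw [hαmul]
    nlinarith [t1, t2, e2]
  have hmem : αs ∈ {α : ℝ | α ∈ Set.Icc (0:ℝ) 1 ∧ (Amix G α).PosSemidef} :=
    ⟨⟨hα0, hα1⟩, hPSD⟩
  have hbdd : BddBelow {α : ℝ | α ∈ Set.Icc (0:ℝ) 1 ∧ (Amix G α).PosSemidef} :=
    ⟨0, fun y hy => hy.1.1⟩
  have h1 : alpha0 G ≤ αs := csInf_le hbdd hmem
  have h2 : αs < s / (ε + 2 * s) := by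
    rw [hαsdef]
    exact div_lt_div_of_pos_left hs0 (by linarith) (by linarith)
  exact lt_of_le_of_lt h1 h2
end

section
/- Let G be a simple graph on n ≥ 1 vertices with m edges and chromatic number χ ≥ 2, and let α be a real number with 0 ≤ α ≤ 1. Then λ_min(A_α(G)) ≤ (α·χ − 1)·2m / ((χ − 1)·n). -/
open Matrix SimpleGraph

lemma rayleigh_aux {n : Type*} [Fintype n] [DecidableEq n] {M : Matrix n n ℝ}
    (hM : M.IsHermitian) (x : n → ℝ) :
    (⨅ i, hM.eigenvalues i) * (x ⬝ᵥ x) ≤ x ⬝ᵥ M *ᵥ x := by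
  classical
  cases isEmpty_or_nonempty n with
  | inl h => simp [dotProduct, Real.iInf_of_isEmpty]
  | inr h =>
  set U : Matrix n n ℝ := (hM.eigenvectorUnitary : Matrix n n ℝ) with hU
  set y : n → ℝ := (star U) *ᵥ x with hy
  have hUstar : star U = Uᵀ := by
    ext i j; simp [conjTranspose_apply]
  have hUy : U *ᵥ y = x := by
    rw [hy, mulVec_mulVec, (Matrix.mem_unitaryGroup_iff).mp hM.eigenvectorUnitary.2, one_mulVec]
  have key : ∀ (u v : n → ℝ) (A : Matrix n n ℝ), (A *ᵥ u) ⬝ᵥ v = u ⬝ᵥ (Aᵀ *ᵥ v) := by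
    intro u v A
    rw [dotProduct_comm, dotProduct_mulVec, ← vecMul_transpose, dotProduct_comm,
      transpose_transpose]
  have hxx : x ⬝ᵥ x = ∑ i, (y i)^2 := by
    have : x ⬝ᵥ x = y ⬝ᵥ y := by
      conv_lhs => rw [← hUy]
      rw [key, ← hUstar, mulVec_mulVec, hy]
      rw [(Matrix.mem_unitaryGroup_iff').mp hM.eigenvectorUnitary.2, one_mulVec]
    rw [this]; simp [dotProduct, sq]
  have hMx : x ⬝ᵥ M *ᵥ x = ∑ i, hM.eigenvalues i * (y i)^2 := by
    set D : Matrix n n ℝ := diagonal (RCLike.ofReal ∘ hM.eigenvalues) with hD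
    have h1 : y ⬝ᵥ D *ᵥ y = x ⬝ᵥ M *ᵥ x := by
      conv_lhs => rw [hy]
      rw [key x (D *ᵥ y) (star U), hUstar, transpose_transpose, hy, mulVec_mulVec,
        mulVec_mulVec, hM.spectral_theorem, Unitary.conjStarAlgAut_apply]
    rw [← h1, hD]
    simp only [dotProduct, mulVec_diagonal, sq, RCLike.ofReal_real_eq_id, id_eq,
      Function.comp_apply]
    exact Finset.sum_congr rfl fun i _ => by ring
  rw [hxx, hMx, Finset.mul_sum]
  apply Finset.sum_le_sum
  intro i _
  have h1 : (⨅ j, hM.eigenvalues j) ≤ hM.eigenvalues i :=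
    ciInf_le (Finite.bddBelow_range _) i
  nlinarith [sq_nonneg (y i)]

/-- If G has order n ≥ 1, size m, chromatic number χ ≥ 2, and
0 ≤ α ≤ 1, then λ_min(A_α(G)) ≤ (α·χ − 1)·2m / ((χ − 1)·n). -/
theorem stmt_14 {V : Type*} [Fintype V] [DecidableEq V] (G : SimpleGraph V)
    [DecidableRel G.Adj]
    (n : ℕ) (hn : n = Fintype.card V) (hn1 : 1 ≤ n)
    (m : ℕ) (hm : m = G.edgeFinset.card)
    (χ : ℕ) (hχ : G.chromaticNumber = χ) (hχ2 : 2 ≤ χ)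
    (α : ℝ) (hα₁ : 0 ≤ α) (hα₂ : α ≤ 1) :
    lambdaMin (Amix G α) ≤ (α * χ - 1) * (2 * m) / ((χ - 1) * n) := by
  classical
  -- Hermitian
  have hadj : (adjM G).IsHermitian := by
    unfold adjM
    ext i j
    simp [conjTranspose_apply, SimpleGraph.adjMatrix_apply, G.adj_comm]
  have hdeg : (degM G).IsHermitian := by
    unfold degM
    ext i j
    simp only [conjTranspose_apply, Matrix.diagonal_apply, star_trivial]
    rcases eq_or_ne i j with h | h
    · subst h; rfl
    · rw [if_neg h, if_neg (Ne.symm h)]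
  have hHerm : (Amix G α).IsHermitian := by
    have : (Amix G α)ᴴ = Amix G α := by
      unfold Amix
      rw [conjTranspose_add, conjTranspose_smul, conjTranspose_smul, hdeg, hadj]
      simp
    exact this
  have hlam : lambdaMin (Amix G α) = ⨅ i, hHerm.eigenvalues i := by
    unfold lambdaMin
    rw [dif_pos hHerm]
    rfl
  -- Coloring
  have hcol : G.Colorable χ := chromaticNumber_le_iff_colorable.mp (le_of_eq hχ)
  obtain ⟨C⟩ := hcol
  set y : Fin χ → V → ℝ := fun i v => (if C v = i then (χ:ℝ) else 0) - 1 with hyd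
  -- per-vertex identities
  have hsq : ∀ v, ∑ i, (y i v)^2 = (χ:ℝ)^2 - χ := by
    intro v
    have h1 : ∀ i : Fin χ, (y i v)^2 = (if C v = i then (χ:ℝ)^2 - 2*χ else 0) + 1 := by
      intro i
      simp only [hyd]
      split <;> ring
    rw [Finset.sum_congr rfl fun i _ => h1 i, Finset.sum_add_distrib,
      Finset.sum_ite_eq, if_pos (Finset.mem_univ _)]
    simp
    ring
  have hcross : ∀ u v, C u ≠ C v → ∑ i, y i u * y i v = -(χ:ℝ) := by
    intro u v huv
    have h1 : ∀ i : Fin χ, y i u * y i v =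
        ((if C u = i then -(χ:ℝ) else 0) + (if C v = i then -(χ:ℝ) else 0)) + 1 := by
      intro i
      simp only [hyd]
      rcases eq_or_ne (C u) i with h2 | h2 <;> rcases eq_or_ne (C v) i with h3 | h3
      · exact absurd (h2.trans h3.symm) huv
      all_goals simp [h2, h3]; try ring
    rw [Finset.sum_congr rfl fun i _ => h1 i, Finset.sum_add_distrib, Finset.sum_add_distrib,
      Finset.sum_ite_eq, Finset.sum_ite_eq, if_pos (Finset.mem_univ _),
      if_pos (Finset.mem_univ _)]
    simp
  -- quadratic form formula
  have hQ : ∀ w : V → ℝ, w ⬝ᵥ (Amix G α) *ᵥ w =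
      α * (∑ v, (G.degree v : ℝ) * (w v)^2)
      + (1-α) * (∑ u, w u * ∑ v ∈ G.neighborFinset u, w v) := by
    intro w
    unfold Amix
    rw [add_mulVec, dotProduct_add, smul_mulVec, smul_mulVec, dotProduct_smul,
      dotProduct_smul, smul_eq_mul, smul_eq_mul]
    congr 1
    · congr 1
      unfold degM
      simp only [dotProduct, mulVec_diagonal]
      refine Finset.sum_congr rfl fun v _ => ?_
      ring_nf
      congr!
    · congr 1
      unfold adjM
      simp only [dotProduct, SimpleGraph.adjMatrix_mulVec_apply]
      refine Finset.sum_congr rfl fun u _ => ?_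
      congr 1
      refine Finset.sum_congr ?_ fun _ _ => rfl
      ext v
      simp [SimpleGraph.mem_neighborFinset]
  have hdegsum : ∑ v, (G.degree v : ℝ) = 2 * m := by
    rw [← Nat.cast_sum, G.sum_degrees_eq_twice_card_edges, hm]
    push_cast
    ring
  have hDsum : ∑ i : Fin χ, ∑ v, (G.degree v:ℝ) * (y i v)^2 = (2*m) * ((χ:ℝ)^2 - χ) := by
    rw [Finset.sum_comm]
    have h1 : ∀ v, ∑ i : Fin χ, (G.degree v:ℝ) * (y i v)^2 = (G.degree v:ℝ) * ((χ:ℝ)^2-χ) :=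
      fun v => by rw [← Finset.mul_sum, hsq]
    rw [Finset.sum_congr rfl fun v _ => h1 v, ← Finset.sum_mul, hdegsum]
  have hAsum : ∑ i : Fin χ, ∑ u, y i u * ∑ v ∈ G.neighborFinset u, y i v
      = (2*m) * (-(χ:ℝ)) := by
    calc ∑ i : Fin χ, ∑ u, y i u * ∑ v ∈ G.neighborFinset u, y i v
        = ∑ i : Fin χ, ∑ u, ∑ v ∈ G.neighborFinset u, y i u * y i v :=
          Finset.sum_congr rfl fun i _ =>
            Finset.sum_congr rfl fun u _ => Finset.mul_sum _ _ _
      _ = ∑ u, ∑ i : Fin χ, ∑ v ∈ G.neighborFinset u, y i u * y i v := Finset.sum_comm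
      _ = ∑ u, ∑ v ∈ G.neighborFinset u, ∑ i : Fin χ, y i u * y i v :=
          Finset.sum_congr rfl fun u _ => Finset.sum_comm
      _ = ∑ u, ∑ v ∈ G.neighborFinset u, (-(χ:ℝ)) := by
          refine Finset.sum_congr rfl fun u _ => Finset.sum_congr rfl fun v hv => ?_
          exact hcross u v (C.valid ((G.mem_neighborFinset u v).mp hv))
      _ = ∑ u, (G.degree u : ℝ) * (-(χ:ℝ)) := by
          refine Finset.sum_congr rfl fun u _ => ?_
          rw [Finset.sum_const, SimpleGraph.card_neighborFinset_eq_degree, nsmul_eq_mul]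
      _ = (2*m) * (-(χ:ℝ)) := by rw [← Finset.sum_mul, hdegsum]
  have hT : ∑ i : Fin χ, (y i ⬝ᵥ y i) = (n:ℝ) * ((χ:ℝ)^2 - χ) := by
    have h1 : ∀ i, y i ⬝ᵥ y i = ∑ v, (y i v)^2 := fun i => by simp [dotProduct, sq]
    rw [Finset.sum_congr rfl fun i _ => h1 i, Finset.sum_comm,
      Finset.sum_congr rfl fun v (_ : v ∈ Finset.univ) => hsq v, Finset.sum_const,
      Finset.card_univ, ← hn, nsmul_eq_mul]
  have main : lambdaMin (Amix G α) * ((n:ℝ) * ((χ:ℝ)^2 - χ)) ≤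
      α * ((2*m) * ((χ:ℝ)^2-χ)) + (1-α) * ((2*m) * (-(χ:ℝ))) := by
    rw [← hT, Finset.mul_sum]
    calc ∑ i : Fin χ, lambdaMin (Amix G α) * (y i ⬝ᵥ y i)
        ≤ ∑ i : Fin χ, y i ⬝ᵥ (Amix G α) *ᵥ y i :=
          Finset.sum_le_sum fun i _ => by rw [hlam]; exact rayleigh_aux hHerm (y i)
      _ = ∑ i : Fin χ, (α * (∑ v, (G.degree v : ℝ) * (y i v)^2)
            + (1-α) * (∑ u, y i u * ∑ v ∈ G.neighborFinset u, y i v)) :=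
          Finset.sum_congr rfl fun i _ => hQ (y i)
      _ = α * ((2*m) * ((χ:ℝ)^2-χ)) + (1-α) * ((2*m) * (-(χ:ℝ))) := by
          rw [Finset.sum_add_distrib, ← Finset.mul_sum, ← Finset.mul_sum, hDsum, hAsum]
  have hχR : (2:ℝ) ≤ (χ:ℝ) := by exact_mod_cast hχ2
  have hnR : (1:ℝ) ≤ (n:ℝ) := by exact_mod_cast hn1
  have hdpos : (0:ℝ) < ((χ:ℝ)-1) * n := by nlinarith
  have hχpos : (0:ℝ) < (χ:ℝ) := by linarith
  rw [le_div_iff₀ hdpos]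
  apply le_of_mul_le_mul_right _ hχpos
  calc lambdaMin (Amix G α) * (((χ:ℝ)-1)*n) * χ
      = lambdaMin (Amix G α) * ((n:ℝ) * ((χ:ℝ)^2 - χ)) := by ring
    _ ≤ α * ((2*m) * ((χ:ℝ)^2-χ)) + (1-α) * ((2*m) * (-(χ:ℝ))) := main
    _ = (α * χ - 1) * (2*m) * χ := by ring
end

section
/- Let G be a simple graph on n ≥ 1 vertices with m edges, let r ≥ 1 be an integer, let c be a proper coloring of G with colors {1, …, r}, and let α ∈ [0,1] be real. For a color k ∈ {1, …, r}, let V_k be the set of vertices of color k and let e_k = Σ_{u ∈ V_k} deg(u). Then λ_min(A_α(G)) · (r(r−2)·|V_k| + n) ≤ 2m + (αr − 2)·r·e_k. -/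
open Matrix SimpleGraph

lemma lambdaMin_mul_le {n : Type*} [Fintype n] [DecidableEq n] [Nonempty n]
    {M : Matrix n n ℝ} (hM : M.IsHermitian) (x : n → ℝ) :
    lambdaMin M * (x ⬝ᵥ x) ≤ x ⬝ᵥ (M *ᵥ x) := by
  set c := lambdaMin M with hcdef
  have hc : ∀ i, c ≤ hM.eigenvalues i := by
    intro i
    rw [hcdef]
    unfold lambdaMin
    rw [dif_pos hM]
    exact ciInf_le (Set.Finite.bddBelow (Set.finite_range _)) i
  have hdecomp : M - c • (1 : Matrix n n ℝ) =
      (hM.eigenvectorUnitary : Matrix n n ℝ) *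
        Matrix.diagonal (fun i => hM.eigenvalues i - c) *
        star (hM.eigenvectorUnitary : Matrix n n ℝ) := by
    have hU : (hM.eigenvectorUnitary : Matrix n n ℝ) *
        star (hM.eigenvectorUnitary : Matrix n n ℝ) = 1 :=
      Matrix.mem_unitaryGroup_iff.mp hM.eigenvectorUnitary.2
    have h1 : Matrix.diagonal (fun i => hM.eigenvalues i - c) =
        Matrix.diagonal (RCLike.ofReal ∘ hM.eigenvalues) - c • (1 : Matrix n n ℝ) := by
      rw [← Matrix.diagonal_sub]
      congr 1
      ext i j
      simp [Matrix.one_apply, Matrix.diagonal_apply]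
    rw [h1, Matrix.mul_sub, Matrix.sub_mul,
      ← Unitary.conjStarAlgAut_apply (S := ℝ) (x := Matrix.diagonal (RCLike.ofReal ∘ hM.eigenvalues)),
      ← hM.spectral_theorem, Matrix.mul_smul,
      Matrix.smul_mul, Matrix.mul_one, hU]
  have hpsd : (M - c • (1 : Matrix n n ℝ)).PosSemidef := by
    rw [hdecomp]
    exact (Matrix.PosSemidef.diagonal (fun i => by simpa using hc i)).mul_mul_conjTranspose_same _
  have key := hpsd.dotProduct_mulVec_nonneg x
  have hstar : star x = x := rfl
  rw [hstar, Matrix.sub_mulVec, dotProduct_sub] at key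
  have h2 : (c • (1 : Matrix n n ℝ)) *ᵥ x = c • x := by
    simp [Matrix.smul_mulVec]
  rw [h2, dotProduct_smul] at key
  simp only [smul_eq_mul] at key
  linarith


/-- For a proper coloring c of G with colors in {1,…,r} (here Fin r),
with V_k the class of color k and e_k the sum of degrees over V_k,
λ_min(A_α(G)) · (r(r−2)·|V_k| + n) ≤ 2m + (αr − 2)·r·e_k. -/
theorem stmt_15 {V : Type*} [Fintype V] [DecidableEq V] (G : SimpleGraph V)
    [DecidableRel G.Adj]
    (n : ℕ) (hn : n = Fintype.card V) (hn1 : 1 ≤ n)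
    (m : ℕ) (hm : m = G.edgeFinset.card)
    (r : ℕ) (hr : 1 ≤ r) (c : G.Coloring (Fin r)) (k : Fin r)
    (Vk : Finset V) (hVk : Vk = Finset.univ.filter fun v => c v = k)
    (ek : ℕ) (hek : ek = ∑ u ∈ Vk, G.degree u)
    (α : ℝ) (hα₁ : 0 ≤ α) (hα₂ : α ≤ 1) :
    lambdaMin (Amix G α) * ((r : ℝ) * ((r : ℝ) - 2) * Vk.card + n)
      ≤ 2 * m + (α * r - 2) * r * ek := by
  have hne : Nonempty V := by
    rw [hn] at hn1; exact Fintype.card_pos_iff.mp hn1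
  set χ : V → ℝ := fun v => if c v = k then 1 else 0 with hχdef
  set x : V → ℝ := fun v => (r : ℝ) * χ v - 1 with hxdef
  set a : V → V → ℝ := fun u w => if G.Adj u w then 1 else 0 with hadef
  have hχsq : ∀ v, χ v * χ v = χ v := by
    intro v; simp only [hχdef]; split <;> ring
  have hχadj : ∀ u w, G.Adj u w → χ u * χ w = 0 := by
    intro u w h
    have hne' := c.valid h
    simp only [hχdef]
    by_cases h1 : c u = k
    · by_cases h2 : c w = k
      · exact absurd (h1.trans h2.symm) hne'
      · simp [h1, h2]
    · simp [h1]
  have hxsq : ∀ v, x v * x v = (r : ℝ) * ((r : ℝ) - 2) * χ v + 1 := by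
    intro v
    simp only [hxdef]
    linear_combination ((r : ℝ))^2 * hχsq v
  -- basic sums
  have sumχ : ∑ v, χ v = (Vk.card : ℝ) := by
    simp only [hχdef, hVk]
    simp [Finset.sum_boole]
  have sumdeg : ∑ v, (G.degree v : ℝ) = 2 * m := by
    rw [hm]
    exact_mod_cast G.sum_degrees_eq_twice_card_edges
  have sumdegχ : ∑ v, (G.degree v : ℝ) * χ v = (ek : ℝ) := by
    simp only [hχdef, mul_ite, mul_one, mul_zero]
    rw [Finset.sum_ite, Finset.sum_const_zero, add_zero, hek, hVk]
    push_cast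
    rfl
  have hasymm : ∀ u w, a u w = a w u := by
    intro u w
    simp only [hadef]
    exact if_congr (G.adj_comm u w) rfl rfl
  have hrowsum : ∀ u, ∑ w, a u w = (G.degree u : ℝ) := by
    intro u
    simp only [hadef]
    rw [Finset.sum_boole]
    congr 1
    rw [← SimpleGraph.neighborFinset_eq_filter]
    exact G.card_neighborFinset_eq_degree u
  have hdegM : degM G = Matrix.diagonal (fun v => (G.degree v : ℝ)) := by
    unfold degM; congr!
  have hadjM : adjM G = G.adjMatrix ℝ := by
    unfold adjM; congr!
  -- Hermitian
  have hHerm : (Amix G α).IsHermitian := by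
    unfold Amix
    rw [hdegM, hadjM]
    show _ᴴ = _
    ext i j
    rcases eq_or_ne i j with rfl | h
    · simp [Matrix.conjTranspose_apply, Matrix.diagonal_apply, Matrix.add_apply, Matrix.smul_apply]
    · simp [Matrix.conjTranspose_apply, Matrix.diagonal_apply, Matrix.add_apply, Matrix.smul_apply,
        G.adj_comm, h, Ne.symm h]
  -- quadratic form of the adjacency part
  have hQAexp : x ⬝ᵥ (adjM G *ᵥ x) = ∑ u, ∑ w, a u w * (x u * x w) := by
    rw [hadjM]
    simp only [dotProduct, Matrix.mulVec, Finset.mul_sum]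
    refine Finset.sum_congr rfl fun u _ => Finset.sum_congr rfl fun w _ => ?_
    simp only [dotProduct, hadef, SimpleGraph.adjMatrix_apply]
    ring
  have hpair : ∀ u w, a u w * (x u * x w) = a u w - (r:ℝ) * (a u w * χ u)
      - (r:ℝ) * (a u w * χ w) := by
    intro u w
    by_cases h : G.Adj u w
    · have h0 := hχadj u w h
      simp only [hadef, if_pos h, hxdef]
      linear_combination ((r : ℝ))^2 * h0
    · simp [hadef, h]
  have hsum1 : ∑ u, ∑ w, a u w = 2 * (m:ℝ) := by
    rw [← sumdeg]
    exact Finset.sum_congr rfl fun u _ => hrowsum u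
  have hsum2 : ∑ u, ∑ w, a u w * χ u = (ek : ℝ) := by
    rw [← sumdegχ]
    refine Finset.sum_congr rfl fun u _ => ?_
    rw [← Finset.sum_mul, hrowsum u]
  have hsum3 : ∑ u, ∑ w, a u w * χ w = (ek : ℝ) := by
    rw [Finset.sum_comm, ← sumdegχ]
    refine Finset.sum_congr rfl fun w _ => ?_
    have : ∀ u, a u w = a w u := fun u => hasymm u w
    rw [show (∑ u, a u w * χ w) = (∑ u, a w u) * χ w by
      rw [Finset.sum_mul]; exact Finset.sum_congr rfl fun u _ => by rw [this u]]
    rw [hrowsum w]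
  have hQA : x ⬝ᵥ (adjM G *ᵥ x) = 2 * (m:ℝ) - 2 * (r:ℝ) * (ek:ℝ) := by
    rw [hQAexp]
    have : ∑ u, ∑ w, a u w * (x u * x w)
        = ∑ u, ∑ w, (a u w - (r:ℝ) * (a u w * χ u) - (r:ℝ) * (a u w * χ w)) :=
      Finset.sum_congr rfl fun u _ => Finset.sum_congr rfl fun w _ => hpair u w
    refine this.trans ?_
    have e1 : ∑ u, ∑ w, (a u w - (r:ℝ) * (a u w * χ u) - (r:ℝ) * (a u w * χ w))
        = (∑ u, ∑ w, a u w) - (r:ℝ) * (∑ u, ∑ w, a u w * χ u)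
          - (r:ℝ) * (∑ u, ∑ w, a u w * χ w) := by
      simp [Finset.sum_sub_distrib, Finset.mul_sum]
    rw [e1, hsum1, hsum2, hsum3]
    ring
  -- quadratic form of the degree part
  have hQD : x ⬝ᵥ (degM G *ᵥ x) = (r:ℝ) * ((r:ℝ) - 2) * (ek:ℝ) + 2 * (m:ℝ) := by
    rw [hdegM]
    simp only [dotProduct, Matrix.mulVec_diagonal]
    have : ∑ v, x v * ((G.degree v : ℝ) * x v)
        = ∑ v, ((r:ℝ) * ((r:ℝ) - 2) * ((G.degree v : ℝ) * χ v) + (G.degree v : ℝ)) :=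
      Finset.sum_congr rfl fun v _ => by linear_combination (G.degree v : ℝ) * hxsq v
    refine this.trans ?_
    rw [Finset.sum_add_distrib, ← Finset.mul_sum, sumdegχ, sumdeg]
  have hnorm : x ⬝ᵥ x = (r:ℝ) * ((r:ℝ) - 2) * (Vk.card:ℝ) + (n:ℝ) := by
    simp only [dotProduct]
    have : ∑ v, x v * x v = ∑ v, ((r:ℝ) * ((r:ℝ) - 2) * χ v + 1) :=
      Finset.sum_congr rfl fun v _ => hxsq v
    refine this.trans ?_
    rw [Finset.sum_add_distrib, ← Finset.mul_sum, sumχ]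
    simp [hn]
  have hQ : x ⬝ᵥ ((Amix G α) *ᵥ x) = 2 * (m:ℝ) + (α * r - 2) * r * ek := by
    unfold Amix
    rw [Matrix.add_mulVec, dotProduct_add, Matrix.smul_mulVec, Matrix.smul_mulVec,
      dotProduct_smul, dotProduct_smul, smul_eq_mul, smul_eq_mul, hQD, hQA]
    ring
  have := lambdaMin_mul_le hHerm x
  rw [hnorm, hQ] at this
  exact this
end

section
/- Let G be a simple graph on a finite vertex set containing at least one edge, and let r ≥ 2 be an integer such that G is r-colorable (its chromatic number is at most r). Then α₀(G) ≥ 1/r. -/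
open Matrix SimpleGraph

section Aux
variable {V : Type*} [Fintype V]

lemma amix_psd_ge {G : SimpleGraph V} (hedge : G.edgeSet.Nonempty) {r : ℕ} (hr : 2 ≤ r)
    (hcol : G.Colorable r) {α : ℝ} (hpsd : (Amix G α).PosSemidef) :
    1 / (r : ℝ) ≤ α := by
  classical
  have hrpos : (0:ℝ) < r := by
    have : (0:ℕ) < r := by omega
    exact_mod_cast this
  obtain ⟨c⟩ := hcol
  set M := Amix G α with hM
  set x : Fin r → V → ℝ := fun i v => if c v = i then (r:ℝ) - 1 else -1 with hx
  -- key cross-sum identity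
  have hδ : ∀ u v : V, (∑ i : Fin r, (if c u = i then (1:ℝ) else 0) * (if c v = i then 1 else 0))
      = if c u = c v then 1 else 0 := by
    intro u v
    have h1 : ∀ i : Fin r, (if c u = i then (1:ℝ) else 0) * (if c v = i then 1 else 0)
        = if c u = i then (if c v = i then (1:ℝ) else 0) else 0 := by
      intro i; by_cases h : c u = i <;> simp [h]
    rw [Finset.sum_congr rfl fun i _ => h1 i, Finset.sum_ite_eq]
    simp [eq_comm]
  have hK : ∀ u v : V, (∑ i : Fin r, x i u * x i v)
      = (r:ℝ) * ((r:ℝ) * (if c u = c v then 1 else 0) - 1) := by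
    intro u v
    have h2 : ∀ i : Fin r, x i u * x i v
        = (r:ℝ)^2 * ((if c u = i then (1:ℝ) else 0) * (if c v = i then 1 else 0))
          - (r:ℝ) * (if c u = i then (1:ℝ) else 0)
          - (r:ℝ) * (if c v = i then (1:ℝ) else 0) + 1 := by
      intro i
      by_cases h1 : c u = i <;> by_cases h2 : c v = i <;> simp [hx, h1, h2] <;> ring
    rw [Finset.sum_congr rfl fun i _ => h2 i]
    simp only [Finset.sum_add_distrib, Finset.sum_sub_distrib, ← Finset.mul_sum, hδ u v,
      Finset.sum_ite_eq, Finset.mem_univ, if_true, Finset.sum_const, Finset.card_univ,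
      Fintype.card_fin, nsmul_eq_mul, mul_one]
    ring
  -- the quadratic form sum
  set S : ℝ := ∑ i : Fin r, (x i) ⬝ᵥ (M *ᵥ (x i)) with hS
  have hS0 : 0 ≤ S := by
    refine Finset.sum_nonneg fun i _ => ?_
    have := hpsd.dotProduct_mulVec_nonneg (x i)
    simpa using this
  have hSeq : S = ∑ u : V, ∑ v : V, M u v * (∑ i : Fin r, x i u * x i v) := by
    rw [hS]
    simp only [dotProduct, mulVec, Finset.mul_sum]
    rw [Finset.sum_comm]
    refine Finset.sum_congr rfl fun u _ => ?_
    rw [Finset.sum_comm]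
    refine Finset.sum_congr rfl fun v _ => ?_
    exact Finset.sum_congr rfl fun i _ => by ring
  -- entries of M
  have hMapp : ∀ u v : V, M u v
      = α * (if u = v then (G.degree u : ℝ) else 0) + (1-α) * (if G.Adj u v then 1 else 0) := by
    intro u v
    simp [hM, Amix, degM, adjM, Matrix.diagonal_apply]
  have hrow : ∀ u : V, (∑ v : V, M u v * ((r:ℝ) * ((r:ℝ) * (if c u = c v then 1 else 0) - 1)))
      = (G.degree u : ℝ) * (α * ((r:ℝ) * ((r:ℝ) - 1)) - (1-α) * (r:ℝ)) := by
    intro u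
    have hterm : ∀ v : V, M u v * ((r:ℝ) * ((r:ℝ) * (if c u = c v then 1 else 0) - 1))
        = (if u = v then α * (G.degree u : ℝ) * ((r:ℝ) * ((r:ℝ) - 1)) else 0)
          + (if G.Adj u v then (1-α) * (-(r:ℝ)) else 0) := by
      intro v
      rw [hMapp u v]
      by_cases h : u = v
      · subst h
        simp [G.loopless.irrefl u]
      · by_cases h2 : G.Adj u v
        · have hne : c u ≠ c v := c.valid h2
          simp [h, h2, hne]
        · simp [h, h2]
    rw [Finset.sum_congr rfl fun v _ => hterm v, Finset.sum_add_distrib]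
    rw [Finset.sum_ite_eq, ← Finset.sum_filter]
    have hcard : (Finset.univ.filter (G.Adj u)).card = G.degree u := by
      rw [← SimpleGraph.neighborFinset_eq_filter]
      exact G.card_neighborFinset_eq_degree u
    rw [Finset.sum_const, hcard]
    simp only [nsmul_eq_mul, Finset.mem_univ, if_true]
    ring
  have hStot : S = (∑ u : V, (G.degree u : ℝ)) * (α * ((r:ℝ) * ((r:ℝ) - 1)) - (1-α) * (r:ℝ)) := by
    rw [hSeq, Finset.sum_mul]
    refine Finset.sum_congr rfl fun u _ => ?_
    rw [Finset.sum_congr rfl fun v _ => by rw [hK u v]]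
    exact hrow u
  -- total degree is positive
  have hadj : ∃ u v : V, G.Adj u v := by
    obtain ⟨e, he⟩ := hedge
    induction e using Sym2.ind with
    | _ u v => exact ⟨u, v, he⟩
  obtain ⟨u, v, huv⟩ := hadj
  have hdu : 0 < (G.degree u : ℝ) := by
    have : 0 < G.degree u := G.degree_pos_iff_exists_adj u |>.mpr ⟨v, huv⟩
    exact_mod_cast this
  have hdeg : 0 < ∑ w : V, (G.degree w : ℝ) := by
    refine Finset.sum_pos' (fun w _ => by positivity) ⟨u, Finset.mem_univ u, hdu⟩
  have hfac : 0 ≤ α * ((r:ℝ) * ((r:ℝ) - 1)) - (1-α) * (r:ℝ) := by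
    by_contra h
    push_neg at h
    have : S < 0 := by
      rw [hStot]
      exact mul_neg_of_pos_of_neg hdeg h
    linarith
  rw [div_le_iff₀ hrpos]
  nlinarith [hrpos]

end Aux

/-- If G has an edge and is r-colorable with r ≥ 2, then α₀(G) ≥ 1/r. -/
theorem stmt_16 {V : Type*} [Fintype V] (G : SimpleGraph V)
    (hedge : G.edgeSet.Nonempty) (r : ℕ) (hr : 2 ≤ r) (hcol : G.Colorable r) :
    1 / (r : ℝ) ≤ alpha0 G := by
  classical
  have hne : ({α : ℝ | α ∈ Set.Icc (0:ℝ) 1 ∧ (Amix G α).PosSemidef}).Nonempty := by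
    refine ⟨1, ⟨by norm_num, ?_⟩⟩
    have h1 : Amix G 1 = degM G := by simp [Amix]
    rw [h1, degM]
    exact Matrix.PosSemidef.diagonal fun v => by positivity
  refine le_csInf hne ?_
  rintro α ⟨_, hpsd⟩
  exact amix_psd_ge hedge hr hcol hpsd
end
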